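/- arXiv:1712.09574 — 13 statements merged into one kernel-verified Lean document; each statement's English description precedes it below -/
import Mathlib

section
/- In any category C with finite coproducts equipped with a notion of abstract guardedness (a relation closed under the rules (trv), (par), (cmp)), the weakening rule (wkn) is derivable: if f : X → Y is σ-guarded for a summand σ : Y' ↪ Y, and θ : Y'' ↪ Y' is a summand of Y', then f is (σ∘θ)-guarded. -/
/-!
Statement 0: In any category `C` with finite coproducts equipped with a notion of
abstract guardedness (a relation closed under the rules (trv), (par), (cmp)),
the weakening rule (wkn) is derivable: if `f : X ⟶ Y` is `σ`-guarded for a summand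
`σ : Y' ↪ Y`, and `θ : Y'' ↪ Y'` is a summand of `Y'`, then `f` is `(σ ∘ θ)`-guarded.
-/

open CategoryTheory CategoryTheory.Limits

universe v u

/-- `(σ, σ')` form a binary coproduct cospan, i.e. a summand together with its complement. -/
def IsCoprodCospan {C : Type u} [Category.{v} C] {Y' Y'' Y : C}
    (σ : Y' ⟶ Y) (σ' : Y'' ⟶ Y) : Prop :=
  Nonempty (IsColimit (BinaryCofan.mk σ σ'))

/-- A notion of abstract guardedness on a category: a relation `guarded f σ σ'`
between morphisms `f : X ⟶ Y` and summands `σ : Y' ⟶ Y` (given together with a chosen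
complement `σ' : Y'' ⟶ Y`), closed under the rules (trv), (par) and (cmp).
Rules are stated for arbitrary coproduct cospans, not just chosen coproducts. -/
structure Guardedness (C : Type u) [Category.{v} C] where
  /-- `f` is guarded in the summand `σ` with complement `σ'`. -/
  guarded : ∀ {X Y' Y'' Y : C}, (X ⟶ Y) → (Y' ⟶ Y) → (Y'' ⟶ Y) → Prop
  /-- (trv): `inl ∘ f` is guarded in the summand `inr`. -/
  trv : ∀ {X Y Z P : C} (i₁ : Y ⟶ P) (i₂ : Z ⟶ P), IsCoprodCospan i₁ i₂ →
      ∀ f : X ⟶ Y, guarded (f ≫ i₁) i₂ i₁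
  /-- (par): a copair of `σ`-guarded morphisms is `σ`-guarded. -/
  par : ∀ {X Y P Z' Z'' Z : C} (j₁ : X ⟶ P) (j₂ : Y ⟶ P), IsCoprodCospan j₁ j₂ →
      ∀ (σ : Z' ⟶ Z) (σ' : Z'' ⟶ Z) (u : P ⟶ Z),
      guarded (j₁ ≫ u) σ σ' → guarded (j₂ ≫ u) σ σ' → guarded u σ σ'
  /-- (cmp): postcomposing the unguarded part with a `σ`-guarded morphism yields a
  `σ`-guarded morphism. -/
  cmp : ∀ {X Y Z P V' V'' V : C} (i₁ : Y ⟶ P) (i₂ : Z ⟶ P), IsCoprodCospan i₁ i₂ →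
      ∀ (σ : V' ⟶ V) (σ' : V'' ⟶ V) (f : X ⟶ P) (u : P ⟶ V),
      guarded f i₂ i₁ → guarded (i₁ ≫ u) σ σ' → guarded (f ≫ u) σ σ'


lemma cofan_inl_desc {C : Type u} [Category.{v} C] {A B P T : C}
    (i₁ : A ⟶ P) (i₂ : B ⟶ P) (h : IsColimit (BinaryCofan.mk i₁ i₂))
    (f : A ⟶ T) (g : B ⟶ T) : i₁ ≫ h.desc (BinaryCofan.mk f g) = f :=
  h.fac _ ⟨WalkingPair.left⟩

lemma cofan_inr_desc {C : Type u} [Category.{v} C] {A B P T : C}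
    (i₁ : A ⟶ P) (i₂ : B ⟶ P) (h : IsColimit (BinaryCofan.mk i₁ i₂))
    (f : A ⟶ T) (g : B ⟶ T) : i₂ ≫ h.desc (BinaryCofan.mk f g) = g :=
  h.fac _ ⟨WalkingPair.right⟩

lemma cofan_hom_ext {C : Type u} [Category.{v} C] {A B P T : C}
    (i₁ : A ⟶ P) (i₂ : B ⟶ P) (h : IsColimit (BinaryCofan.mk i₁ i₂))
    {m m' : P ⟶ T} (h₁ : i₁ ≫ m = i₁ ≫ m') (h₂ : i₂ ≫ m = i₂ ≫ m') : m = m' :=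
  BinaryCofan.IsColimit.hom_ext h h₁ h₂

/-- (wkn) is derivable: if `f` is `σ`-guarded and `θ` is a summand of the domain of `σ`,
then `f` is `(σ ∘ θ)`-guarded, where the complement of `θ ≫ σ` is the copair `c` of
`θbar ≫ σ` and `σbar`. -/
theorem wkn_derivable {C : Type u} [Category.{v} C] (G : Guardedness C)
    {X Y Y' Y'' Q Q' W : C}
    (σ : Y' ⟶ Y) (σbar : Q ⟶ Y) (hσ : IsCoprodCospan σ σbar)
    (θ : Y'' ⟶ Y') (θbar : Q' ⟶ Y') (hθ : IsCoprodCospan θ θbar)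
    (f : X ⟶ Y) (hf : G.guarded f σ σbar)
    (k₁ : Q' ⟶ W) (k₂ : Q ⟶ W) (hk : IsCoprodCospan k₁ k₂)
    (c : W ⟶ Y) (hc₁ : k₁ ≫ c = θbar ≫ σ) (hc₂ : k₂ ≫ c = σbar) :
    G.guarded f (θ ≫ σ) c := by

  obtain ⟨hσ'⟩ := hσ
  obtain ⟨hθ'⟩ := hθ
  obtain ⟨hk'⟩ := hk
  have swap : IsCoprodCospan σbar σ := by
    refine ⟨BinaryCofan.IsColimit.mk _
      (fun g f => hσ'.desc (BinaryCofan.mk f g)) ?_ ?_ ?_⟩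
    · intro T g f; exact cofan_inr_desc σ σbar hσ' f g
    · intro T g f; exact cofan_inl_desc σ σbar hσ' f g
    · intro T g f m h₁ h₂
      refine cofan_hom_ext σ σbar hσ' ?_ ?_
      · erw [cofan_inl_desc σ σbar hσ']; exact h₂
      · erw [cofan_inr_desc σ σbar hσ']; exact h₁
  have hcop : IsCoprodCospan c (θ ≫ σ) := by
    refine ⟨BinaryCofan.IsColimit.mk _
      (fun a b => hσ'.desc (BinaryCofan.mk
        (hθ'.desc (BinaryCofan.mk b (k₁ ≫ a))) (k₂ ≫ a))) ?_ ?_ ?_⟩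
    · intro T a b
      refine cofan_hom_ext k₁ k₂ hk' ?_ ?_
      · show k₁ ≫ c ≫ _ = k₁ ≫ a
        erw [← Category.assoc, hc₁, Category.assoc, cofan_inl_desc σ σbar hσ',
          cofan_inr_desc θ θbar hθ']
      · show k₂ ≫ c ≫ _ = k₂ ≫ a
        erw [← Category.assoc, hc₂, cofan_inr_desc σ σbar hσ']; rfl
    · intro T a b
      show (θ ≫ σ) ≫ _ = b
      erw [Category.assoc, cofan_inl_desc σ σbar hσ', cofan_inl_desc θ θbar hθ']
    · intro T a b m h₁ h₂
      simp only [BinaryCofan.mk_inl, BinaryCofan.mk_inr] at h₁ h₂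
      refine cofan_hom_ext σ σbar hσ' ?_ ?_
      · erw [cofan_inl_desc σ σbar hσ']
        refine cofan_hom_ext θ θbar hθ' ?_ ?_
        · erw [cofan_inl_desc θ θbar hθ', ← Category.assoc]; exact h₂
        · erw [cofan_inr_desc θ θbar hθ', ← Category.assoc, ← hc₁, Category.assoc, h₁]
      · erw [cofan_inr_desc σ σbar hσ', ← hc₂, Category.assoc, h₁]; rfl
  have hbar : G.guarded σbar (θ ≫ σ) c := by
    have := G.trv c (θ ≫ σ) hcop k₂
    rwa [hc₂] at this
  have := G.cmp σbar σ swap (θ ≫ σ) c f (𝟙 Y) hf (by rwa [Category.comp_id])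
  rwa [Category.comp_id] at this
end

section
/- In any category C with finite coproducts, vacuous guardedness — where f : X → Y is declared σ-guarded iff f factors through the coproduct complement σ̄ of σ — is a notion of abstract guardedness (i.e., it is closed under the rules (trv), (par), (cmp)), and it is the least such notion: for any other notion of abstract guardedness on C, every vacuously σ-guarded morphism is σ-guarded. -/
/-!
Statement 1: Vacuous guardedness — `f : X ⟶ Y` is `σ`-guarded iff `f` factors through
the coproduct complement `σ'` of `σ` — is a notion of abstract guardedness (closed under
(trv), (par), (cmp)), and it is the least such notion.
-/

open CategoryTheory CategoryTheory.Limits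

universe v u

/-- `f` is vacuously `σ`-guarded: it factors through the complement `σ'` of `σ`. -/
def VacuouslyGuarded {C : Type u} [Category.{v} C] {X Y' Y'' Y : C}
    (f : X ⟶ Y) (_σ : Y' ⟶ Y) (σ' : Y'' ⟶ Y) : Prop :=
  ∃ g : X ⟶ Y'', f = g ≫ σ'

/-- Vacuous guardedness is a notion of abstract guardedness, and it is the least one:
any other notion of abstract guardedness contains it (on actual summands). -/
theorem vacuous_guardedness_least (C : Type u) [Category.{v} C] :
    (∃ G : Guardedness C, ∀ (X Y' Y'' Y : C) (f : X ⟶ Y) (σ : Y' ⟶ Y) (σ' : Y'' ⟶ Y),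
        G.guarded f σ σ' ↔ VacuouslyGuarded f σ σ') ∧
    (∀ (G : Guardedness C) (X Y' Y'' Y : C) (f : X ⟶ Y) (σ : Y' ⟶ Y) (σ' : Y'' ⟶ Y),
        IsCoprodCospan σ' σ → VacuouslyGuarded f σ σ' → G.guarded f σ σ') := by
  constructor
  · refine ⟨⟨fun f σ σ' => VacuouslyGuarded f σ σ', ?_, ?_, ?_⟩, fun _ _ _ _ _ _ _ => Iff.rfl⟩
    · intro X Y Z P i₁ i₂ _ f
      exact ⟨f, rfl⟩
    · rintro X Y P Z' Z'' Z j₁ j₂ ⟨hc⟩ σ σ' u ⟨g₁, hg₁⟩ ⟨g₂, hg₂⟩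
      refine ⟨hc.desc (BinaryCofan.mk g₁ g₂), ?_⟩
      apply BinaryCofan.IsColimit.hom_ext hc
      · show j₁ ≫ u = j₁ ≫ hc.desc (BinaryCofan.mk g₁ g₂) ≫ σ'
        exact hg₁.trans ((congrArg (fun k => k ≫ σ') (hc.fac (BinaryCofan.mk g₁ g₂) ⟨WalkingPair.left⟩)).symm.trans (Category.assoc _ _ _))
      · show j₂ ≫ u = j₂ ≫ hc.desc (BinaryCofan.mk g₁ g₂) ≫ σ'
        exact hg₂.trans ((congrArg (fun k => k ≫ σ') (hc.fac (BinaryCofan.mk g₁ g₂) ⟨WalkingPair.right⟩)).symm.trans (Category.assoc _ _ _))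
    · rintro X Y Z P V' V'' V i₁ i₂ _ σ σ' f u ⟨g, hg⟩ ⟨h, hh⟩
      exact ⟨g ≫ h, by simp [hg, Category.assoc, hh]⟩
  · rintro G X Y' Y'' Y f σ σ' hcc ⟨g, rfl⟩
    exact G.trv σ' σ hcc g
end

section
/- Let C be a guarded pre-iterative category, let σ : Z ↪ Y be a summand, and let f : X → Y+X be guarded in the summand σ+id : Z+X ↪ Y+X. Then the solution f† : X → Y given by the iteration operator is σ-guarded. -/
/-!
Statement 3: Let `C` be a guarded pre-iterative category, `σ : Z ↪ Y` a summand
(with complement `σbar : Z' ↪ Y`), and let `f : X ⟶ Y ⨿ X` be guarded in the summand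
`σ + id : Z ⨿ X ↪ Y ⨿ X` (whose complement is `σbar ≫ inl`). Then the solution
`f† : X ⟶ Y` given by the iteration operator is `σ`-guarded.
-/

open CategoryTheory CategoryTheory.Limits

universe v u

/-- A guarded pre-iterative category: every `inr`-guarded `f : X ⟶ Y ⨿ X` has a chosen
solution `iter f` satisfying the fixpoint identity `f† = [id, f†] ∘ f`. -/
structure PreIterative (C : Type u) [Category.{v} C] [HasBinaryCoproducts C]
    extends Guardedness C where
  iter : ∀ {X Y : C} (f : X ⟶ Y ⨿ X),
      guarded f (coprod.inr : X ⟶ Y ⨿ X) coprod.inl → (X ⟶ Y)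
  iter_fixpoint : ∀ {X Y : C} (f : X ⟶ Y ⨿ X)
      (hf : guarded f (coprod.inr : X ⟶ Y ⨿ X) coprod.inl),
      iter f hf = f ≫ coprod.desc (𝟙 Y) (iter f hf)

/-- The iteration operator preserves guardedness: if `f : X ⟶ Y ⨿ X` is guarded in
`σ + id` then `f†` is `σ`-guarded. -/
theorem iter_preserves_guardedness {C : Type u} [Category.{v} C] [HasBinaryCoproducts C]
    (G : PreIterative C) {X Y Z Z' : C}
    (σ : Z ⟶ Y) (σbar : Z' ⟶ Y) (hσ : IsCoprodCospan σ σbar)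
    (f : X ⟶ Y ⨿ X)
    (hf : G.guarded f (coprod.map σ (𝟙 X)) (σbar ≫ coprod.inl))
    (hf' : G.guarded f (coprod.inr : X ⟶ Y ⨿ X) coprod.inl) :
    G.guarded (G.iter f hf') σ σbar := by
  obtain ⟨h⟩ := hσ
  -- symmetric cospan (σbar, σ)
  have hsym : IsCoprodCospan σbar σ := by
    refine ⟨BinaryCofan.IsColimit.mk _ (fun s1 s2 => h.desc (BinaryCofan.mk s2 s1))
      (fun s1 s2 => h.fac _ ⟨.right⟩) (fun s1 s2 => h.fac _ ⟨.left⟩) ?_⟩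
    intro T s1 s2 m h1 h2
    apply BinaryCofan.IsColimit.hom_ext h
    · exact h2.trans (h.fac (BinaryCofan.mk s2 s1) ⟨.left⟩).symm
    · exact h1.trans (h.fac (BinaryCofan.mk s2 s1) ⟨.right⟩).symm
  -- cospan (σbar ≫ inl, σ + id) into Y ⨿ X
  have hcos : IsCoprodCospan (σbar ≫ (coprod.inl : Y ⟶ Y ⨿ X)) (coprod.map σ (𝟙 X)) := by
    refine ⟨BinaryCofan.IsColimit.mk _
      (fun s1 s2 => coprod.desc (h.desc (BinaryCofan.mk (coprod.inl ≫ s2) s1)) (coprod.inr ≫ s2))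
      (fun s1 s2 => ?_) (fun s1 s2 => ?_) ?_⟩
    · erw [Category.assoc, coprod.inl_desc]
      exact h.fac (BinaryCofan.mk (coprod.inl ≫ s2) s1) ⟨.right⟩
    · erw [BinaryCofan.mk_inr]
      apply coprod.hom_ext
      · erw [coprod.inl_map_assoc, coprod.inl_desc]
        exact h.fac (BinaryCofan.mk (coprod.inl ≫ s2) s1) ⟨.left⟩
      · erw [coprod.inr_map_assoc, coprod.inr_desc, Category.id_comp]
        rfl
    · intro T s1 s2 m h1 h2
      obtain ⟨m', rfl⟩ : ∃ m' : Y ⨿ X ⟶ T, m' = m := ⟨m, rfl⟩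
      apply coprod.hom_ext
      · apply BinaryCofan.IsColimit.hom_ext h
        · erw [coprod.inl_desc]
          exact ((coprod.inl_map_assoc σ (𝟙 X) m').symm.trans (congrArg (fun g => coprod.inl ≫ g) h2)).trans (h.fac (BinaryCofan.mk (coprod.inl ≫ s2) s1) ⟨.left⟩).symm
        · erw [coprod.inl_desc]
          exact ((Category.assoc _ _ _).symm.trans h1).trans (h.fac (BinaryCofan.mk (coprod.inl ≫ s2) s1) ⟨.right⟩).symm
      · erw [coprod.inr_desc]
        exact ((coprod.inr_map_assoc σ (𝟙 X) m').trans (Category.id_comp _)).symm.trans (congrArg (fun g => coprod.inr ≫ g) h2)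
  -- σbar is σ-guarded
  have hbar : G.guarded σbar σ σbar := by
    have := G.trv σbar σ hsym (𝟙 Z')
    simpa using this
  -- apply cmp
  have key := G.cmp (σbar ≫ coprod.inl) (coprod.map σ (𝟙 X)) hcos σ σbar f
    (coprod.desc (𝟙 Y) (G.iter f hf')) hf (by simpa only [Category.assoc, coprod.inl_desc, Category.comp_id] using hbar)
  have := G.iter_fixpoint f hf'
  rw [this]
  exact key
end

section
/- Let α : T → S be a guarded monad morphism between guarded pre-iterative monads T and S, where S is guarded iterative. Then α is iteration-preserving: for every inr-guarded f : X → T(Y+X), α∘f† = (α∘f)†. -/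
open CategoryTheory CategoryTheory.Limits

universe v u

/-- A monad on `C`, presented as a Kleisli triple. -/
structure KMonad (C : Type u) [Category.{v} C] where
  obj : C → C
  η : ∀ X : C, X ⟶ obj X
  bind : ∀ {X Y : C}, (X ⟶ obj Y) → (obj X ⟶ obj Y)
  η_bind : ∀ {X Y : C} (f : X ⟶ obj Y), η X ≫ bind f = f
  bind_η : ∀ X : C, bind (η X) = 𝟙 (obj X)
  bind_comp : ∀ {X Y Z : C} (f : X ⟶ obj Y) (g : Y ⟶ obj Z),
      bind (f ≫ bind g) = bind f ≫ bind g

/-- An abstractly guarded monad: its Kleisli category carries a notion of abstract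
guardedness, i.e. a relation `guarded f σ σ'` between Kleisli morphisms
`f : X ⟶ obj Y` and summands `σ : Y' ⟶ Y` (with chosen complement `σ' : Y'' ⟶ Y`)
closed under the rules (trv), (par) and (cmp), where the coproducts in the Kleisli
category are inherited from `C` (with injections `η ∘ inj`). -/
structure GMonad (C : Type u) [Category.{v} C] extends KMonad C where
  guarded : ∀ {X Y' Y'' Y : C}, (X ⟶ obj Y) → (Y' ⟶ Y) → (Y'' ⟶ Y) → Prop
  trv : ∀ {X Y Z P : C} (i₁ : Y ⟶ P) (i₂ : Z ⟶ P), IsCoprodCospan i₁ i₂ →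
      ∀ f : X ⟶ obj Y, guarded (f ≫ bind (i₁ ≫ η P)) i₂ i₁
  par : ∀ {X Y P Z' Z'' Z : C} (j₁ : X ⟶ P) (j₂ : Y ⟶ P), IsCoprodCospan j₁ j₂ →
      ∀ (σ : Z' ⟶ Z) (σ' : Z'' ⟶ Z) (u : P ⟶ obj Z),
      guarded (j₁ ≫ u) σ σ' → guarded (j₂ ≫ u) σ σ' → guarded u σ σ'
  cmp : ∀ {X Y Z P V' V'' V : C} (i₁ : Y ⟶ P) (i₂ : Z ⟶ P), IsCoprodCospan i₁ i₂ →
      ∀ (σ : V' ⟶ V) (σ' : V'' ⟶ V) (f : X ⟶ obj P) (u : P ⟶ obj V),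
      guarded f i₂ i₁ → guarded (i₁ ≫ u) σ σ' → guarded (f ≫ bind u) σ σ'

/-- A guarded pre-iterative monad: every `inr`-guarded `f : X ⟶ T(Y+X)` has a chosen
solution `iter f hf` satisfying the fixpoint identity `f† = [η, f†]* ∘ f`. -/
structure PIMonad (C : Type u) [Category.{v} C] [HasBinaryCoproducts C]
    extends GMonad C where
  iter : ∀ {X Y : C} (f : X ⟶ obj (Y ⨿ X)),
      guarded f (coprod.inr : X ⟶ Y ⨿ X) coprod.inl → (X ⟶ obj Y)
  iter_fixpoint : ∀ {X Y : C} (f : X ⟶ obj (Y ⨿ X))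
      (hf : guarded f (coprod.inr : X ⟶ Y ⨿ X) coprod.inl),
      iter f hf = f ≫ bind (coprod.desc (η Y) (iter f hf))

/-- A guarded iterative monad: solutions of `inr`-guarded morphisms are unique. -/
structure IMonad (C : Type u) [Category.{v} C] [HasBinaryCoproducts C]
    extends PIMonad C where
  iter_unique : ∀ {X Y : C} (f : X ⟶ obj (Y ⨿ X))
      (hf : guarded f (coprod.inr : X ⟶ Y ⨿ X) coprod.inl) (s : X ⟶ obj Y),
      s = f ≫ bind (coprod.desc (η Y) s) → s = iter f hf

/-- A monad morphism, in Kleisli-triple form. -/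
structure KMonadHom {C : Type u} [Category.{v} C] (T S : KMonad C) where
  app : ∀ X : C, T.obj X ⟶ S.obj X
  app_η : ∀ X : C, T.η X ≫ app X = S.η X
  app_bind : ∀ (X Y : C) (f : X ⟶ T.obj Y),
      T.bind f ≫ app Y = app X ≫ S.bind (f ≫ app Y)

/-- A guarded monad morphism: a monad morphism that preserves guardedness. -/
structure GMonadHom {C : Type u} [Category.{v} C] (T S : GMonad C)
    extends KMonadHom T.toKMonad S.toKMonad where
  app_guarded : ∀ (X Y' Y'' Y : C) (f : X ⟶ T.obj Y) (σ : Y' ⟶ Y) (σ' : Y'' ⟶ Y),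
      T.guarded f σ σ' → S.guarded (f ≫ app Y) σ σ'

/-- a guarded monad morphism `α` from a guarded pre-iterative monad `T`
to a guarded iterative monad `S` is iteration-preserving: `α ∘ f† = (α ∘ f)†`. -/
theorem guarded_hom_iteration_preserving {C : Type u} [Category.{v} C]
    [HasBinaryCoproducts C] (T : PIMonad C) (S : IMonad C)
    (α : GMonadHom T.toGMonad S.toGMonad)
    (X Y : C) (f : X ⟶ T.obj (Y ⨿ X))
    (hf : T.guarded f (coprod.inr : X ⟶ Y ⨿ X) coprod.inl)
    (hαf : S.guarded (f ≫ α.app (Y ⨿ X)) (coprod.inr : X ⟶ Y ⨿ X) coprod.inl) :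
    T.iter f hf ≫ α.app Y = S.iter (f ≫ α.app (Y ⨿ X)) hαf := by
  apply S.iter_unique
  have key : coprod.desc (T.η Y) (T.iter f hf) ≫ α.app Y
      = coprod.desc (S.η Y) (T.iter f hf ≫ α.app Y) := by
    apply coprod.hom_ext <;> simp [α.app_η]
  calc T.iter f hf ≫ α.app Y
      = (f ≫ T.bind (coprod.desc (T.η Y) (T.iter f hf))) ≫ α.app Y := by
        rw [← T.iter_fixpoint]
    _ = f ≫ (T.bind (coprod.desc (T.η Y) (T.iter f hf)) ≫ α.app Y) := by
        rw [Category.assoc]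
    _ = f ≫ α.app (Y ⨿ X) ≫ S.bind (coprod.desc (T.η Y) (T.iter f hf) ≫ α.app Y) := by
        rw [α.app_bind]
    _ = (f ≫ α.app (Y ⨿ X)) ≫ S.bind (coprod.desc (S.η Y) (T.iter f hf ≫ α.app Y)) := by
        rw [key, Category.assoc]
end

section
/- Let (T, T̄, (-)°, m) be an idealized monad on a category C with finite coproducts. Then weak guardedness — where f : X → TY is weakly σ-guarded for a summand σ : Z ↪ Y with complement σ̄ : Y' ↪ Y if f factors through [η∘σ̄, m]* : T(Y' + T̄Y) → TY — makes the Kleisli category of T into an abstractly guarded category, i.e., weak guardedness is closed under the rules (trv), (par), and (cmp). -/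
open CategoryTheory CategoryTheory.Limits

universe v u

/-- An idealized monad: a monad `(obj, η, bind)` in Kleisli-triple form, together with a
module `(mobj, mlift)` over it and a module-to-monad morphism `m : mobj ⟶ obj`. -/
structure IdealizedMonad (C : Type u) [Category.{v} C] where
  obj : C → C
  η : ∀ X : C, X ⟶ obj X
  bind : ∀ {X Y : C}, (X ⟶ obj Y) → (obj X ⟶ obj Y)
  η_bind : ∀ {X Y : C} (f : X ⟶ obj Y), η X ≫ bind f = f
  bind_η : ∀ X : C, bind (η X) = 𝟙 (obj X)
  bind_comp : ∀ {X Y Z : C} (f : X ⟶ obj Y) (g : Y ⟶ obj Z),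
      bind (f ≫ bind g) = bind f ≫ bind g
  /-- The module carrier. -/
  mobj : C → C
  /-- The module lifting `f ↦ f°`. -/
  mlift : ∀ {X Y : C}, (X ⟶ obj Y) → (mobj X ⟶ mobj Y)
  mlift_η : ∀ X : C, mlift (η X) = 𝟙 (mobj X)
  mlift_comp : ∀ {X Y Z : C} (f : X ⟶ obj Y) (g : Y ⟶ obj Z),
      mlift (f ≫ bind g) = mlift f ≫ mlift g
  /-- The module-to-monad morphism. -/
  m : ∀ X : C, mobj X ⟶ obj X
  m_natural : ∀ {X Y : C} (f : X ⟶ obj Y), mlift f ≫ m Y = m X ≫ bind f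

/-- `f : X ⟶ T Y` is weakly `σ`-guarded for a summand `σ` with complement `σ' : Y' ⟶ Y`
if `f` factors through `[η ∘ σ', m]* : T(Y' + T̄Y) ⟶ TY`. -/
def IdealizedMonad.WeaklyGuarded {C : Type u} [Category.{v} C] [HasBinaryCoproducts C]
    (T : IdealizedMonad C) {X Y' Y : C} (f : X ⟶ T.obj Y) (σ' : Y' ⟶ Y) : Prop :=
  ∃ g : X ⟶ T.obj (Y' ⨿ T.mobj Y),
    f = g ≫ T.bind (coprod.desc (σ' ≫ T.η Y) (T.m Y))

/-- weak guardedness makes the Kleisli category of an idealized monad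
into an abstractly guarded category: it is closed under (trv), (par), and (cmp).
(Here the guardedness relation associated to a summand `σ` with complement `σ'`
depends only on the complement `σ'`.) -/
theorem weak_guardedness_abstractly_guarded {C : Type u} [Category.{v} C]
    [HasBinaryCoproducts C] (T : IdealizedMonad C) :
    -- (trv)
    (∀ (X Y Z P : C) (i₁ : Y ⟶ P) (i₂ : Z ⟶ P), IsCoprodCospan i₁ i₂ →
      ∀ f : X ⟶ T.obj Y, T.WeaklyGuarded (f ≫ T.bind (i₁ ≫ T.η P)) i₁) ∧
    -- (par)
    (∀ (X Y P Z'' Z : C) (j₁ : X ⟶ P) (j₂ : Y ⟶ P), IsCoprodCospan j₁ j₂ →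
      ∀ (σ' : Z'' ⟶ Z) (u : P ⟶ T.obj Z),
        T.WeaklyGuarded (j₁ ≫ u) σ' → T.WeaklyGuarded (j₂ ≫ u) σ' →
        T.WeaklyGuarded u σ') ∧
    -- (cmp)
    (∀ (X Y Z P V'' V : C) (i₁ : Y ⟶ P) (i₂ : Z ⟶ P), IsCoprodCospan i₁ i₂ →
      ∀ (σ' : V'' ⟶ V) (f : X ⟶ T.obj P) (u : P ⟶ T.obj V),
        T.WeaklyGuarded f i₁ → T.WeaklyGuarded (i₁ ≫ u) σ' →
        T.WeaklyGuarded (f ≫ T.bind u) σ') := by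
  refine ⟨?_, ?_, ?_⟩
  · -- (trv)
    intro X Y Z P i₁ i₂ _ f
    refine ⟨f ≫ T.bind (coprod.inl ≫ T.η (Y ⨿ T.mobj P)), ?_⟩
    rw [Category.assoc, ← T.bind_comp]
    congr 1
    rw [Category.assoc, T.η_bind, coprod.inl_desc]
  · -- (par)
    intro X Y P Z'' Z j₁ j₂ ⟨hc⟩ σ' u ⟨g₁, hg₁⟩ ⟨g₂, hg₂⟩
    refine ⟨hc.desc (BinaryCofan.mk g₁ g₂), ?_⟩
    have h1 : j₁ ≫ hc.desc (BinaryCofan.mk g₁ g₂) = g₁ :=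
      hc.fac (BinaryCofan.mk g₁ g₂) ⟨WalkingPair.left⟩
    have h2 : j₂ ≫ hc.desc (BinaryCofan.mk g₁ g₂) = g₂ :=
      hc.fac (BinaryCofan.mk g₁ g₂) ⟨WalkingPair.right⟩
    apply BinaryCofan.IsColimit.hom_ext hc
    · show j₁ ≫ u = j₁ ≫ hc.desc (BinaryCofan.mk g₁ g₂) ≫ _
      exact hg₁.trans ((congrArg (fun x => x ≫ T.bind (coprod.desc (σ' ≫ T.η Z) (T.m Z))) h1).symm.trans (Category.assoc _ _ _))
    · show j₂ ≫ u = j₂ ≫ hc.desc (BinaryCofan.mk g₁ g₂) ≫ _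
      exact hg₂.trans ((congrArg (fun x => x ≫ T.bind (coprod.desc (σ' ≫ T.η Z) (T.m Z))) h2).symm.trans (Category.assoc _ _ _))
  · -- (cmp)
    intro X Y Z P V'' V i₁ i₂ _ σ' f u ⟨g, hg⟩ ⟨h, hh⟩
    refine ⟨g ≫ T.bind (coprod.desc h
      (T.mlift u ≫ coprod.inr ≫ T.η (V'' ⨿ T.mobj V))), ?_⟩
    rw [hg]
    rw [Category.assoc, Category.assoc, ← T.bind_comp, ← T.bind_comp]
    congr 2
    apply coprod.hom_ext
    · rw [coprod.inl_desc_assoc, coprod.inl_desc_assoc, Category.assoc, T.η_bind, hh]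
    · rw [coprod.inr_desc_assoc, coprod.inr_desc_assoc, Category.assoc, Category.assoc,
        T.η_bind, coprod.inr_desc, T.m_natural]
end

section
/- Let (T, T̄, (-)°, m) be an idealized monad that is completely iterative. Then every weakly inr-guarded morphism f : X → T(Y+X) (i.e., f factoring through [η∘inl, m]* : T(Y + T̄(Y+X)) → T(Y+X)) has a unique solution f† : X → TY, i.e., a unique morphism satisfying f† = [η, f†]* ∘ f. -/
open CategoryTheory CategoryTheory.Limits

universe v u

/-- `f : X ⟶ T(Y+Z)` is guarded in the sense of completely iterative monads (extended to
summand complements `σ'`): it factors through `[η ∘ σ', m] : Y' + T̄ Y ⟶ T Y`. -/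
def IdealizedMonad.IdealGuarded {C : Type u} [Category.{v} C] [HasBinaryCoproducts C]
    (T : IdealizedMonad C) {X Y' Y : C} (f : X ⟶ T.obj Y) (σ' : Y' ⟶ Y) : Prop :=
  ∃ g : X ⟶ Y' ⨿ T.mobj Y, f = g ≫ coprod.desc (σ' ≫ T.η Y) (T.m Y)

/-- if the idealized monad `T` is completely iterative (every guarded
`f : X ⟶ T(Y+X)` has a unique solution), then every weakly inr-guarded
`f : X ⟶ T(Y+X)` has a unique solution `f† = [η, f†]* ∘ f`. -/
theorem weakly_guarded_unique_solution {C : Type u} [Category.{v} C]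
    [HasBinaryCoproducts C] (T : IdealizedMonad C)
    (hci : ∀ (X Y : C) (f : X ⟶ T.obj (Y ⨿ X)),
      T.IdealGuarded f (coprod.inl : Y ⟶ Y ⨿ X) →
      ∃! s : X ⟶ T.obj Y, s = f ≫ T.bind (coprod.desc (T.η Y) s))
    (X Y : C) (f : X ⟶ T.obj (Y ⨿ X))
    (hf : T.WeaklyGuarded f (coprod.inl : Y ⟶ Y ⨿ X)) :
    ∃! s : X ⟶ T.obj Y, s = f ≫ T.bind (coprod.desc (T.η Y) s) := by
  obtain ⟨g, hg⟩ := hf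
  set W := T.mobj (Y ⨿ X) with hW
  set u : Y ⨿ X ⟶ T.obj (Y ⨿ W) := coprod.desc (coprod.inl ≫ T.η _) g with hu
  set F : W ⟶ T.obj (Y ⨿ W) := T.mlift u ≫ T.m _ with hF
  have hFg : T.IdealGuarded F (coprod.inl : Y ⟶ Y ⨿ W) :=
    ⟨T.mlift u ≫ coprod.inr, by simp [hF, coprod.inl_desc, coprod.inr_desc, coprod.inl_desc_assoc, coprod.inr_desc_assoc]⟩
  -- key: for any s, composing f with [η, s]* rewrites via the factorization
  have key : ∀ s : X ⟶ T.obj Y,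
      f ≫ T.bind (coprod.desc (T.η Y) s) =
      g ≫ T.bind (coprod.desc (T.η Y)
        (T.mlift (coprod.desc (T.η Y) s) ≫ T.m Y)) := by
    intro s
    rw [hg, Category.assoc, ← T.bind_comp]
    congr 2
    apply coprod.hom_ext
    · simp [T.η_bind, coprod.inl_desc, coprod.inr_desc, coprod.inl_desc_assoc, coprod.inr_desc_assoc]
    · simp [← T.m_natural, coprod.inl_desc, coprod.inr_desc, coprod.inl_desc_assoc, coprod.inr_desc_assoc]
  -- key2: for any t, F ≫ [η, t]* = mlift [η, g ≫ [η,t]*] ≫ m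
  have key2 : ∀ t : W ⟶ T.obj Y,
      F ≫ T.bind (coprod.desc (T.η Y) t) =
      T.mlift (coprod.desc (T.η Y) (g ≫ T.bind (coprod.desc (T.η Y) t))) ≫ T.m Y := by
    intro t
    rw [hF, Category.assoc, ← T.m_natural, ← Category.assoc, ← T.mlift_comp]
    congr 2
    apply coprod.hom_ext
    · simp [hu, T.η_bind, coprod.inl_desc, coprod.inr_desc, coprod.inl_desc_assoc, coprod.inr_desc_assoc]
    · simp [hu, coprod.inl_desc, coprod.inr_desc, coprod.inl_desc_assoc, coprod.inr_desc_assoc]; rfl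
  obtain ⟨t, ht, htu⟩ := hci W Y F hFg
  refine ⟨g ≫ T.bind (coprod.desc (T.η Y) t), ?_, ?_⟩
  · have ht' := ht.trans (key2 t)
    show g ≫ T.bind (coprod.desc (T.η Y) t) =
      f ≫ T.bind (coprod.desc (T.η Y) (g ≫ T.bind (coprod.desc (T.η Y) t)))
    rw [key, ← ht']
  · intro s' hs'
    have ht'' : T.mlift (coprod.desc (T.η Y) s') ≫ T.m Y = t := by
      apply htu
      show T.mlift (coprod.desc (T.η Y) s') ≫ T.m Y =
        F ≫ T.bind (coprod.desc (T.η Y) (T.mlift (coprod.desc (T.η Y) s') ≫ T.m Y))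
      rw [key2]
      have : g ≫ T.bind (coprod.desc (T.η Y)
          (T.mlift (coprod.desc (T.η Y) s') ≫ T.m Y)) = s' := by
        rw [← key, ← hs']
      rw [this]
    rw [hs', key, ht'']
end

section
/- Any guarded pre-iterative monad satisfying naturality, codiagonal, and uniformity also satisfies dinaturality: ([η∘inl, h]* ∘ g)† = [η, ([η∘inl, g]* ∘ h)†]* ∘ g, whenever either g : X → T(Y+Z) is inr-guarded and h : Z → T(Y+X) is arbitrary, or g : X → T(Y+Z) is arbitrary and h : Z → T(Y+X) is inr-guarded. -/
open CategoryTheory CategoryTheory.Limits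

universe v u

/-- The naturality law of iteration:
`g* ∘ f† = ([T(inl) ∘ g, η ∘ inr]* ∘ f)†` for inr-guarded `f : X ⟶ T(Y+X)` and
`g : Y ⟶ T Z`. -/
def PIMonad.Naturality {C : Type u} [Category.{v} C] [HasBinaryCoproducts C]
    (T : PIMonad C) : Prop :=
  ∀ (X Y Z : C) (f : X ⟶ T.obj (Y ⨿ X))
    (hf : T.guarded f (coprod.inr : X ⟶ Y ⨿ X) coprod.inl)
    (g : Y ⟶ T.obj Z)
    (h' : T.guarded
        (f ≫ T.bind (coprod.desc (g ≫ T.bind (coprod.inl ≫ T.η (Z ⨿ X)))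
          (coprod.inr ≫ T.η (Z ⨿ X))))
        (coprod.inr : X ⟶ Z ⨿ X) coprod.inl),
    T.iter f hf ≫ T.bind g = T.iter _ h'

/-- The dinaturality law of iteration:
`([η ∘ inl, h]* ∘ g)† = [η, ([η ∘ inl, g]* ∘ h)†]* ∘ g`
for `g : X ⟶ T(Y+Z)`, `h : Z ⟶ T(Y+X)` with `g` inr-guarded or `h` inr-guarded. -/
def PIMonad.Dinaturality {C : Type u} [Category.{v} C] [HasBinaryCoproducts C]
    (T : PIMonad C) : Prop :=
  ∀ (X Y Z : C) (g : X ⟶ T.obj (Y ⨿ Z)) (h : Z ⟶ T.obj (Y ⨿ X)),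
    (T.guarded g (coprod.inr : Z ⟶ Y ⨿ Z) coprod.inl ∨
      T.guarded h (coprod.inr : X ⟶ Y ⨿ X) coprod.inl) →
    ∀ (hu : T.guarded (g ≫ T.bind (coprod.desc (coprod.inl ≫ T.η (Y ⨿ X)) h))
        (coprod.inr : X ⟶ Y ⨿ X) coprod.inl)
      (hv : T.guarded (h ≫ T.bind (coprod.desc (coprod.inl ≫ T.η (Y ⨿ Z)) g))
        (coprod.inr : Z ⟶ Y ⨿ Z) coprod.inl),
    T.iter _ hu = g ≫ T.bind (coprod.desc (T.η Y) (T.iter _ hv))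

/-- The codiagonal law of iteration: `(T[id, inr] ∘ f)† = f††` for
`f : X ⟶ T((Y+X)+X)` guarded in the summand `[inl ∘ inr, inr]`. -/
def PIMonad.Codiagonal {C : Type u} [Category.{v} C] [HasBinaryCoproducts C]
    (T : PIMonad C) : Prop :=
  ∀ (X Y : C) (f : X ⟶ T.obj ((Y ⨿ X) ⨿ X))
    (_h12 : T.guarded f
        (coprod.desc (coprod.inr ≫ coprod.inl) coprod.inr : X ⨿ X ⟶ (Y ⨿ X) ⨿ X)
        (coprod.inl ≫ coprod.inl : Y ⟶ (Y ⨿ X) ⨿ X))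
    (h1 : T.guarded f (coprod.inr : X ⟶ (Y ⨿ X) ⨿ X) coprod.inl)
    (h2 : T.guarded (T.iter f h1) (coprod.inr : X ⟶ Y ⨿ X) coprod.inl)
    (h3 : T.guarded (f ≫ T.bind (coprod.desc (𝟙 (Y ⨿ X)) coprod.inr ≫ T.η (Y ⨿ X)))
        (coprod.inr : X ⟶ Y ⨿ X) coprod.inl),
    T.iter _ h3 = T.iter (T.iter f h1) h2

/-- The uniformity law of iteration: `f ∘ h = T(id + h) ∘ g` implies `f† ∘ h = g†`
for inr-guarded `f : X ⟶ T(Y+X)`, inr-guarded `g : Z ⟶ T(Y+Z)`, and `h : Z ⟶ X`. -/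
def PIMonad.Uniformity {C : Type u} [Category.{v} C] [HasBinaryCoproducts C]
    (T : PIMonad C) : Prop :=
  ∀ (X Y Z : C) (f : X ⟶ T.obj (Y ⨿ X))
    (hf : T.guarded f (coprod.inr : X ⟶ Y ⨿ X) coprod.inl)
    (g : Z ⟶ T.obj (Y ⨿ Z))
    (hg : T.guarded g (coprod.inr : Z ⟶ Y ⨿ Z) coprod.inl)
    (h : Z ⟶ X),
    h ≫ f = g ≫ T.bind (coprod.map (𝟙 Y) h ≫ T.η (Y ⨿ X)) →
    h ≫ T.iter f hf = T.iter g hg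

section DinatAux

variable {C : Type u} [Category.{v} C] [HasBinaryCoproducts C]

attribute [local simp] coprod.inl_desc coprod.inr_desc coprod.inl_desc_assoc coprod.inr_desc_assoc

private lemma map_id_eq {A B B' : C} (k : B ⟶ B') :
    (coprod.map (𝟙 A) k : A ⨿ B ⟶ A ⨿ B') = coprod.desc coprod.inl (k ≫ coprod.inr) := by
  apply coprod.hom_ext <;> simp

private lemma desc_comp_inj {A B V : C} (f : A ⨿ B ⟶ V) :
    coprod.desc (coprod.inl ≫ f) (coprod.inr ≫ f) = f := by
  apply coprod.hom_ext <;> simp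

private lemma cospan_inl_inr (A B : C) :
    IsCoprodCospan (coprod.inl : A ⟶ A ⨿ B) coprod.inr := ⟨coprodIsCoprod A B⟩

private lemma cospan_corner (Y W : C) :
    IsCoprodCospan (coprod.inl ≫ coprod.inl : Y ⟶ (Y ⨿ W) ⨿ W)
      (coprod.desc (coprod.inr ≫ coprod.inl) coprod.inr) := by
  constructor
  refine BinaryCofan.isColimitMk
    (fun s => coprod.desc (coprod.desc s.inl (coprod.inl ≫ s.inr)) (coprod.inr ≫ s.inr))
    (fun s => ?_) (fun s => ?_) (fun s m h1 h2 => ?_)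
  · simp; exact coprod.inl_desc _ _
  · apply coprod.hom_ext <;> simp; exact coprod.inr_desc _ _
  · have h2l := congrArg (fun t => coprod.inl ≫ t) h2
    have h2r := congrArg (fun t => coprod.inr ≫ t) h2
    simp only [BinaryCofan.mk_inl, BinaryCofan.mk_inr, coprod.inl_desc, coprod.inr_desc,
      Category.assoc] at h1 h2l h2r
    apply coprod.hom_ext
    · apply coprod.hom_ext
      · simp; exact h1.trans (coprod.inl_desc _ _).symm
      · simp at h2l ⊢; exact h2l.trans (coprod.inr_desc _ _).symm
    · simpa using h2r

variable (T : PIMonad C)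

private lemma guard_eq {X Y' Y'' P : C} {f f' : X ⟶ T.obj P} {σ : Y' ⟶ P} {σ' : Y'' ⟶ P}
    (h : T.guarded f σ σ') (e : f = f') : T.guarded f' σ σ' := e ▸ h

private lemma guard_pure {X Y' Y'' P : C} {σ : Y' ⟶ P} {σ' : Y'' ⟶ P}
    (cosp : IsCoprodCospan σ' σ) {f : X ⟶ T.obj P} (a : X ⟶ Y'')
    (e : f = a ≫ σ' ≫ T.η P) : T.guarded f σ σ' := by
  have h := T.trv σ' σ cosp (a ≫ T.η Y'')
  refine guard_eq T h ?_
  rw [e]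
  simp [Category.assoc, T.η_bind]

private lemma guard_desc {A B Y' Y'' P : C} {σ : Y' ⟶ P} {σ' : Y'' ⟶ P}
    {a : A ⟶ T.obj P} {b : B ⟶ T.obj P} (ha : T.guarded a σ σ') (hb : T.guarded b σ σ') :
    T.guarded (coprod.desc a b) σ σ' := by
  refine T.par coprod.inl coprod.inr (cospan_inl_inr A B) σ σ' (coprod.desc a b) ?_ ?_
  · exact guard_eq T ha (coprod.inl_desc a b).symm
  · exact guard_eq T hb (coprod.inr_desc a b).symm

private lemma guard_bind {X P Q V' V'' V : C} {σ : V' ⟶ V} {σ' : V'' ⟶ V}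
    (f : X ⟶ T.obj (P ⨿ Q)) (hf : T.guarded f (coprod.inr : Q ⟶ P ⨿ Q) coprod.inl)
    (k : P ⨿ Q ⟶ T.obj V) (hk : T.guarded (coprod.inl ≫ k) σ σ') :
    T.guarded (f ≫ T.bind k) σ σ' :=
  T.cmp coprod.inl coprod.inr (cospan_inl_inr P Q) σ σ' f k hf hk

private lemma guard_any {X P V' V'' V : C} {σ : V' ⟶ V} {σ' : V'' ⟶ V}
    (f : X ⟶ T.obj P) (w : P ⟶ T.obj V) (hw : T.guarded w σ σ') :
    T.guarded (f ≫ T.bind w) σ σ' := by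
  have h1 : T.guarded (f ≫ T.bind (coprod.inl ≫ T.η (P ⨿ P)))
      (coprod.inr : P ⟶ P ⨿ P) coprod.inl :=
    T.trv coprod.inl coprod.inr (cospan_inl_inr P P) f
  have h2 := T.cmp coprod.inl coprod.inr (cospan_inl_inr P P) σ σ'
    (f ≫ T.bind (coprod.inl ≫ T.η (P ⨿ P))) (coprod.desc w w) h1
    (guard_eq T hw (coprod.inl_desc w w).symm)
  refine guard_eq T h2 ?_
  simp [Category.assoc, ← T.bind_comp, T.η_bind, coprod.inl_desc]

private lemma iter_congr {X Y : C} {f f' : X ⟶ T.obj (Y ⨿ X)}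
    (hf : T.guarded f (coprod.inr : X ⟶ Y ⨿ X) coprod.inl)
    (hf' : T.guarded f' (coprod.inr : X ⟶ Y ⨿ X) coprod.inl)
    (e : f = f') : T.iter f hf = T.iter f' hf' := by subst e; rfl

private lemma unfold_iter (hcod : T.Codiagonal) (hunif : T.Uniformity)
    {X Y : C} (p : X ⟶ T.obj (Y ⨿ X))
    (hp : T.guarded p (coprod.inr : X ⟶ Y ⨿ X) coprod.inl)
    (hp' : T.guarded (p ≫ T.bind (coprod.desc (coprod.inl ≫ T.η (Y ⨿ X)) p))
      (coprod.inr : X ⟶ Y ⨿ X) coprod.inl) :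
    T.iter _ hp' = T.iter p hp := by
  -- the doubled system Π
  have hPig : T.guarded
      (coprod.desc
        (p ≫ T.bind (coprod.map (𝟙 Y) (coprod.inr : X ⟶ X ⨿ X) ≫ T.η (Y ⨿ (X ⨿ X))))
        (p ≫ T.bind (coprod.map (𝟙 Y) (coprod.inl : X ⟶ X ⨿ X) ≫ T.η (Y ⨿ (X ⨿ X)))))
      (coprod.inr : X ⨿ X ⟶ Y ⨿ (X ⨿ X)) coprod.inl := by
    refine guard_desc T ?_ ?_ <;>
      exact guard_bind T p hp _ (guard_pure T (cospan_inl_inr _ _) (𝟙 Y) (by simp [map_id_eq]))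
  -- the two-level system M
  have h1M : T.guarded
      (coprod.desc
        (p ≫ T.bind (coprod.desc (coprod.inl ≫ coprod.inl ≫ T.η ((Y ⨿ (X ⨿ X)) ⨿ (X ⨿ X)))
          ((coprod.inr : X ⟶ X ⨿ X) ≫ coprod.inr ≫ T.η ((Y ⨿ (X ⨿ X)) ⨿ (X ⨿ X)))))
        (p ≫ T.bind (coprod.desc (coprod.inl ≫ coprod.inl ≫ T.η ((Y ⨿ (X ⨿ X)) ⨿ (X ⨿ X)))
          ((coprod.inl : X ⟶ X ⨿ X) ≫ (coprod.inr : X ⨿ X ⟶ Y ⨿ (X ⨿ X)) ≫ coprod.inl ≫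
            T.η ((Y ⨿ (X ⨿ X)) ⨿ (X ⨿ X))))))
      (coprod.inr : X ⨿ X ⟶ (Y ⨿ (X ⨿ X)) ⨿ (X ⨿ X)) coprod.inl := by
    refine guard_desc T ?_ ?_ <;>
      exact guard_bind T p hp _ (guard_pure T (cospan_inl_inr _ _) coprod.inl (by simp))
  have h12M : T.guarded
      (coprod.desc
        (p ≫ T.bind (coprod.desc (coprod.inl ≫ coprod.inl ≫ T.η ((Y ⨿ (X ⨿ X)) ⨿ (X ⨿ X)))
          ((coprod.inr : X ⟶ X ⨿ X) ≫ coprod.inr ≫ T.η ((Y ⨿ (X ⨿ X)) ⨿ (X ⨿ X)))))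
        (p ≫ T.bind (coprod.desc (coprod.inl ≫ coprod.inl ≫ T.η ((Y ⨿ (X ⨿ X)) ⨿ (X ⨿ X)))
          ((coprod.inl : X ⟶ X ⨿ X) ≫ (coprod.inr : X ⨿ X ⟶ Y ⨿ (X ⨿ X)) ≫ coprod.inl ≫
            T.η ((Y ⨿ (X ⨿ X)) ⨿ (X ⨿ X))))))
      (coprod.desc (coprod.inr ≫ coprod.inl) coprod.inr : (X ⨿ X) ⨿ (X ⨿ X) ⟶ _)
      (coprod.inl ≫ coprod.inl : Y ⟶ _) := by
    refine guard_desc T ?_ ?_ <;>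
      exact guard_bind T p hp _ (guard_pure T (cospan_corner Y (X ⨿ X)) (𝟙 Y) (by simp))
  -- computation of the inner iteration
  have eq2M : coprod.inr ≫ T.iter _ h1M =
      p ≫ T.bind (coprod.map (𝟙 Y) (coprod.inl : X ⟶ X ⨿ X) ≫ T.η (Y ⨿ (X ⨿ X))) := by
    conv_lhs => rw [T.iter_fixpoint _ h1M]
    simp only [Category.assoc, Category.id_comp, Category.comp_id, coprod.inl_desc,
      coprod.inr_desc, coprod.desc_comp, map_id_eq, desc_comp_inj, ← T.bind_comp,
      T.η_bind, T.bind_η]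
  have eq1M : coprod.inl ≫ T.iter _ h1M =
      (p ≫ T.bind (coprod.desc (coprod.inl ≫ T.η (Y ⨿ X)) p)) ≫
        T.bind (coprod.map (𝟙 Y) (coprod.inl : X ⟶ X ⨿ X) ≫ T.η (Y ⨿ (X ⨿ X))) := by
    conv_lhs => rw [T.iter_fixpoint _ h1M]
    simp only [Category.assoc, Category.id_comp, Category.comp_id, coprod.inl_desc,
      coprod.inr_desc, coprod.desc_comp, map_id_eq, desc_comp_inj, ← T.bind_comp,
      T.η_bind, T.bind_η]
    rw [eq2M]
    simp only [Category.assoc, Category.id_comp, Category.comp_id, coprod.inl_desc,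
      coprod.inr_desc, coprod.desc_comp, map_id_eq, desc_comp_inj, ← T.bind_comp,
      T.η_bind, T.bind_η]
  have hDg : T.guarded
      (coprod.desc
        ((p ≫ T.bind (coprod.desc (coprod.inl ≫ T.η (Y ⨿ X)) p)) ≫
          T.bind (coprod.map (𝟙 Y) (coprod.inl : X ⟶ X ⨿ X) ≫ T.η (Y ⨿ (X ⨿ X))))
        (p ≫ T.bind (coprod.map (𝟙 Y) (coprod.inl : X ⟶ X ⨿ X) ≫ T.η (Y ⨿ (X ⨿ X)))))
      (coprod.inr : X ⨿ X ⟶ Y ⨿ (X ⨿ X)) coprod.inl := by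
    refine guard_desc T ?_ ?_
    · exact guard_bind T _ hp' _ (guard_pure T (cospan_inl_inr _ _) (𝟙 Y) (by simp [map_id_eq]))
    · exact guard_bind T p hp _ (guard_pure T (cospan_inl_inr _ _) (𝟙 Y) (by simp [map_id_eq]))
  have eqM : T.iter _ h1M = coprod.desc
      ((p ≫ T.bind (coprod.desc (coprod.inl ≫ T.η (Y ⨿ X)) p)) ≫
        T.bind (coprod.map (𝟙 Y) (coprod.inl : X ⟶ X ⨿ X) ≫ T.η (Y ⨿ (X ⨿ X))))
      (p ≫ T.bind (coprod.map (𝟙 Y) (coprod.inl : X ⟶ X ⨿ X) ≫ T.η (Y ⨿ (X ⨿ X)))) := by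
    apply coprod.hom_ext
    · rw [eq1M, coprod.inl_desc]
    · rw [eq2M, coprod.inr_desc]
  have h2M : T.guarded (T.iter _ h1M) (coprod.inr : X ⨿ X ⟶ Y ⨿ (X ⨿ X)) coprod.inl :=
    guard_eq T hDg eqM.symm
  have foldM_eq :
      (coprod.desc
        (p ≫ T.bind (coprod.desc (coprod.inl ≫ coprod.inl ≫ T.η ((Y ⨿ (X ⨿ X)) ⨿ (X ⨿ X)))
          ((coprod.inr : X ⟶ X ⨿ X) ≫ coprod.inr ≫ T.η ((Y ⨿ (X ⨿ X)) ⨿ (X ⨿ X)))))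
        (p ≫ T.bind (coprod.desc (coprod.inl ≫ coprod.inl ≫ T.η ((Y ⨿ (X ⨿ X)) ⨿ (X ⨿ X)))
          ((coprod.inl : X ⟶ X ⨿ X) ≫ (coprod.inr : X ⨿ X ⟶ Y ⨿ (X ⨿ X)) ≫ coprod.inl ≫
            T.η ((Y ⨿ (X ⨿ X)) ⨿ (X ⨿ X)))))) ≫
        T.bind (coprod.desc (𝟙 (Y ⨿ (X ⨿ X))) coprod.inr ≫ T.η (Y ⨿ (X ⨿ X))) =
      coprod.desc
        (p ≫ T.bind (coprod.map (𝟙 Y) (coprod.inr : X ⟶ X ⨿ X) ≫ T.η (Y ⨿ (X ⨿ X))))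
        (p ≫ T.bind (coprod.map (𝟙 Y) (coprod.inl : X ⟶ X ⨿ X) ≫ T.η (Y ⨿ (X ⨿ X)))) := by
    simp only [Category.assoc, Category.id_comp, Category.comp_id, coprod.inl_desc,
      coprod.inr_desc, coprod.desc_comp, map_id_eq, desc_comp_inj, ← T.bind_comp,
      T.η_bind, T.bind_η]
  have h3M := guard_eq T hPig foldM_eq.symm
  have codiagM := hcod (X ⨿ X) Y _ h12M h1M h2M h3M
  have U3 : coprod.desc (𝟙 X) (𝟙 X) ≫ T.iter p hp = T.iter _ hPig := by
    refine hunif X Y (X ⨿ X) p hp _ hPig (coprod.desc (𝟙 X) (𝟙 X)) ?_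
    apply coprod.hom_ext <;>
      simp only [Category.assoc, Category.id_comp, Category.comp_id, coprod.inl_desc,
        coprod.inr_desc, coprod.desc_comp, map_id_eq, desc_comp_inj, ← T.bind_comp,
        T.η_bind, T.bind_η]
  have U4 : coprod.inl ≫ T.iter _ hDg = T.iter _ hp' := by
    refine hunif (X ⨿ X) Y X _ hDg _ hp' coprod.inl ?_
    rw [coprod.inl_desc]
  calc T.iter _ hp' = coprod.inl ≫ T.iter _ hDg := U4.symm
    _ = coprod.inl ≫ T.iter (T.iter _ h1M) h2M := by rw [iter_congr T hDg h2M eqM.symm]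
    _ = coprod.inl ≫ T.iter _ h3M := by rw [← codiagM]
    _ = coprod.inl ≫ T.iter _ hPig := by rw [iter_congr T h3M hPig foldM_eq]
    _ = coprod.inl ≫ coprod.desc (𝟙 X) (𝟙 X) ≫ T.iter p hp := by rw [← U3]
    _ = T.iter p hp := by simp

private lemma core (hcod : T.Codiagonal) (hunif : T.Uniformity)
    {X Y Z : C} (g : X ⟶ T.obj (Y ⨿ Z)) (h : Z ⟶ T.obj (Y ⨿ X))
    (hh : T.guarded h (coprod.inr : X ⟶ Y ⨿ X) coprod.inl)
    (hu : T.guarded (g ≫ T.bind (coprod.desc (coprod.inl ≫ T.η (Y ⨿ X)) h))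
      (coprod.inr : X ⟶ Y ⨿ X) coprod.inl)
    (hv : T.guarded (h ≫ T.bind (coprod.desc (coprod.inl ≫ T.η (Y ⨿ Z)) g))
      (coprod.inr : Z ⟶ Y ⨿ Z) coprod.inl) :
    T.iter _ hu = g ≫ T.bind (coprod.desc (T.η Y) (T.iter _ hv)) := by
  -- guardedness of basic composites
  have hv'g : T.guarded
      ((h ≫ T.bind (coprod.desc (coprod.inl ≫ T.η (Y ⨿ Z)) g)) ≫
        T.bind (coprod.desc (coprod.inl ≫ T.η (Y ⨿ Z))
          (h ≫ T.bind (coprod.desc (coprod.inl ≫ T.η (Y ⨿ Z)) g))))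
      (coprod.inr : Z ⟶ Y ⨿ Z) coprod.inl :=
    guard_bind T _ hv _ (guard_pure T (cospan_inl_inr _ _) (𝟙 Y) (by simp))
  have hu'g : T.guarded
      ((g ≫ T.bind (coprod.desc (coprod.inl ≫ T.η (Y ⨿ X)) h)) ≫
        T.bind (coprod.desc (coprod.inl ≫ T.η (Y ⨿ X))
          (g ≫ T.bind (coprod.desc (coprod.inl ≫ T.η (Y ⨿ X)) h))))
      (coprod.inr : X ⟶ Y ⨿ X) coprod.inl :=
    guard_bind T _ hu _ (guard_pure T (cospan_inl_inr _ _) (𝟙 Y) (by simp))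
  have hvtg : T.guarded
      (h ≫ T.bind (coprod.desc (coprod.inl ≫ T.η (Y ⨿ X))
        (g ≫ T.bind (coprod.desc (coprod.inl ≫ T.η (Y ⨿ X)) h))))
      (coprod.inr : X ⟶ Y ⨿ X) coprod.inl := by
    refine guard_any T h _ (guard_desc T ?_ hu)
    exact guard_pure T (cospan_inl_inr _ _) (𝟙 Y) (by simp)
  have hutg : T.guarded
      (g ≫ T.bind (coprod.desc (coprod.inl ≫ T.η (Y ⨿ X))
        (h ≫ T.bind (coprod.desc (coprod.inl ≫ T.η (Y ⨿ X))
          (g ≫ T.bind (coprod.desc (coprod.inl ≫ T.η (Y ⨿ X)) h))))))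
      (coprod.inr : X ⟶ Y ⨿ X) coprod.inl := by
    refine guard_any T g _ (guard_desc T ?_ hvtg)
    exact guard_pure T (cospan_inl_inr _ _) (𝟙 Y) (by simp)
  -- guardedness of A, E, hG, θ₆, Γ
  have hAg : T.guarded
      (g ≫ T.bind (coprod.desc (coprod.inl ≫ T.η (Y ⨿ (X ⨿ Z)))
        ((h ≫ T.bind (coprod.desc (coprod.inl ≫ T.η (Y ⨿ Z)) g)) ≫
          T.bind (coprod.map (𝟙 Y) (coprod.inr : Z ⟶ X ⨿ Z) ≫ T.η (Y ⨿ (X ⨿ Z))))))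
      (coprod.inr : X ⨿ Z ⟶ Y ⨿ (X ⨿ Z)) coprod.inl :=
    guard_any T g _ (guard_desc T (guard_pure T (cospan_inl_inr _ _) (𝟙 Y) (by simp))
      (guard_bind T _ hv _ (guard_pure T (cospan_inl_inr _ _) (𝟙 Y) (by simp [map_id_eq]))))
  have hEg : T.guarded
      (((h ≫ T.bind (coprod.desc (coprod.inl ≫ T.η (Y ⨿ Z)) g)) ≫
        T.bind (coprod.desc (coprod.inl ≫ T.η (Y ⨿ Z))
          (h ≫ T.bind (coprod.desc (coprod.inl ≫ T.η (Y ⨿ Z)) g)))) ≫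
        T.bind (coprod.map (𝟙 Y) (coprod.inr : Z ⟶ X ⨿ Z) ≫ T.η (Y ⨿ (X ⨿ Z))))
      (coprod.inr : X ⨿ Z ⟶ Y ⨿ (X ⨿ Z)) coprod.inl :=
    guard_bind T _ hv'g _ (guard_pure T (cospan_inl_inr _ _) (𝟙 Y) (by simp [map_id_eq]))
  have hGg : T.guarded
      (h ≫ T.bind (coprod.map (𝟙 Y) (coprod.inl : X ⟶ X ⨿ Z) ≫ T.η (Y ⨿ (X ⨿ Z))))
      (coprod.inr : X ⨿ Z ⟶ Y ⨿ (X ⨿ Z)) coprod.inl :=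
    guard_bind T h hh _ (guard_pure T (cospan_inl_inr _ _) (𝟙 Y) (by simp [map_id_eq]))
  have hG1g : T.guarded
      ((g ≫ T.bind (coprod.desc (coprod.inl ≫ T.η (Y ⨿ X))
        (h ≫ T.bind (coprod.desc (coprod.inl ≫ T.η (Y ⨿ X))
          (g ≫ T.bind (coprod.desc (coprod.inl ≫ T.η (Y ⨿ X)) h)))))) ≫
        T.bind (coprod.map (𝟙 Y) (coprod.inl : X ⟶ X ⨿ Z) ≫ T.η (Y ⨿ (X ⨿ Z))))
      (coprod.inr : X ⨿ Z ⟶ Y ⨿ (X ⨿ Z)) coprod.inl :=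
    guard_bind T _ hutg _ (guard_pure T (cospan_inl_inr _ _) (𝟙 Y) (by simp [map_id_eq]))
  have hθg := guard_desc T hAg hGg
  have hΓg := guard_desc T hG1g hGg
  have hAEg := guard_desc T hAg hEg
  -- the system N
  have h1N : T.guarded
      (coprod.desc
        (g ≫ T.bind (coprod.desc
          (coprod.inl ≫ coprod.inl ≫ T.η ((Y ⨿ (X ⨿ Z)) ⨿ (X ⨿ Z)))
          ((h ≫ T.bind (coprod.desc (coprod.inl ≫ T.η (Y ⨿ Z)) g)) ≫
            T.bind (coprod.desc
              (coprod.inl ≫ coprod.inl ≫ T.η ((Y ⨿ (X ⨿ Z)) ⨿ (X ⨿ Z)))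
              ((coprod.inr : Z ⟶ X ⨿ Z) ≫ (coprod.inr : X ⨿ Z ⟶ Y ⨿ (X ⨿ Z)) ≫
                coprod.inl ≫ T.η ((Y ⨿ (X ⨿ Z)) ⨿ (X ⨿ Z)))))))
        (h ≫ T.bind (coprod.desc
          (coprod.inl ≫ coprod.inl ≫ T.η ((Y ⨿ (X ⨿ Z)) ⨿ (X ⨿ Z)))
          ((coprod.inl : X ⟶ X ⨿ Z) ≫
            (coprod.inr : X ⨿ Z ⟶ (Y ⨿ (X ⨿ Z)) ⨿ (X ⨿ Z)) ≫
            T.η ((Y ⨿ (X ⨿ Z)) ⨿ (X ⨿ Z))))))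
      (coprod.inr : X ⨿ Z ⟶ (Y ⨿ (X ⨿ Z)) ⨿ (X ⨿ Z)) coprod.inl := by
    refine guard_desc T ?_ ?_
    · exact guard_any T g _ (guard_desc T
        (guard_pure T (cospan_inl_inr _ _) coprod.inl (by simp))
        (guard_bind T _ hv _ (guard_pure T (cospan_inl_inr _ _) coprod.inl (by simp))))
    · exact guard_bind T h hh _ (guard_pure T (cospan_inl_inr _ _) coprod.inl (by simp))
  have h12N : T.guarded
      (coprod.desc
        (g ≫ T.bind (coprod.desc
          (coprod.inl ≫ coprod.inl ≫ T.η ((Y ⨿ (X ⨿ Z)) ⨿ (X ⨿ Z)))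
          ((h ≫ T.bind (coprod.desc (coprod.inl ≫ T.η (Y ⨿ Z)) g)) ≫
            T.bind (coprod.desc
              (coprod.inl ≫ coprod.inl ≫ T.η ((Y ⨿ (X ⨿ Z)) ⨿ (X ⨿ Z)))
              ((coprod.inr : Z ⟶ X ⨿ Z) ≫ (coprod.inr : X ⨿ Z ⟶ Y ⨿ (X ⨿ Z)) ≫
                coprod.inl ≫ T.η ((Y ⨿ (X ⨿ Z)) ⨿ (X ⨿ Z)))))))
        (h ≫ T.bind (coprod.desc
          (coprod.inl ≫ coprod.inl ≫ T.η ((Y ⨿ (X ⨿ Z)) ⨿ (X ⨿ Z)))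
          ((coprod.inl : X ⟶ X ⨿ Z) ≫
            (coprod.inr : X ⨿ Z ⟶ (Y ⨿ (X ⨿ Z)) ⨿ (X ⨿ Z)) ≫
            T.η ((Y ⨿ (X ⨿ Z)) ⨿ (X ⨿ Z))))))
      (coprod.desc (coprod.inr ≫ coprod.inl) coprod.inr :
        (X ⨿ Z) ⨿ (X ⨿ Z) ⟶ (Y ⨿ (X ⨿ Z)) ⨿ (X ⨿ Z))
      (coprod.inl ≫ coprod.inl : Y ⟶ (Y ⨿ (X ⨿ Z)) ⨿ (X ⨿ Z)) := by
    refine guard_desc T ?_ ?_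
    · exact guard_any T g _ (guard_desc T
        (guard_pure T (cospan_corner Y (X ⨿ Z)) (𝟙 Y) (by simp))
        (guard_bind T _ hv _ (guard_pure T (cospan_corner Y (X ⨿ Z)) (𝟙 Y) (by simp))))
    · exact guard_bind T h hh _ (guard_pure T (cospan_corner Y (X ⨿ Z)) (𝟙 Y) (by simp))
  -- iterate N
  have eq1N : coprod.inl ≫ T.iter _ h1N =
      g ≫ T.bind (coprod.desc (coprod.inl ≫ T.η (Y ⨿ (X ⨿ Z)))
        ((h ≫ T.bind (coprod.desc (coprod.inl ≫ T.η (Y ⨿ Z)) g)) ≫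
          T.bind (coprod.map (𝟙 Y) (coprod.inr : Z ⟶ X ⨿ Z) ≫ T.η (Y ⨿ (X ⨿ Z))))) := by
    conv_lhs => rw [T.iter_fixpoint _ h1N]
    simp only [Category.assoc, Category.id_comp, Category.comp_id, coprod.inl_desc,
      coprod.inr_desc, coprod.desc_comp, map_id_eq, desc_comp_inj, ← T.bind_comp,
      T.η_bind, T.bind_η]
  have eq2N : coprod.inr ≫ T.iter _ h1N =
      ((h ≫ T.bind (coprod.desc (coprod.inl ≫ T.η (Y ⨿ Z)) g)) ≫
        T.bind (coprod.desc (coprod.inl ≫ T.η (Y ⨿ Z))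
          (h ≫ T.bind (coprod.desc (coprod.inl ≫ T.η (Y ⨿ Z)) g)))) ≫
        T.bind (coprod.map (𝟙 Y) (coprod.inr : Z ⟶ X ⨿ Z) ≫ T.η (Y ⨿ (X ⨿ Z))) := by
    have stepN : ∀ t : (X ⨿ Z) ⟶ T.obj (Y ⨿ (X ⨿ Z)),
        coprod.inr ≫
          (coprod.desc
            (g ≫ T.bind (coprod.desc
              (coprod.inl ≫ coprod.inl ≫ T.η ((Y ⨿ (X ⨿ Z)) ⨿ (X ⨿ Z)))
              ((h ≫ T.bind (coprod.desc (coprod.inl ≫ T.η (Y ⨿ Z)) g)) ≫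
                T.bind (coprod.desc
                  (coprod.inl ≫ coprod.inl ≫ T.η ((Y ⨿ (X ⨿ Z)) ⨿ (X ⨿ Z)))
                  ((coprod.inr : Z ⟶ X ⨿ Z) ≫ (coprod.inr : X ⨿ Z ⟶ Y ⨿ (X ⨿ Z)) ≫
                    coprod.inl ≫ T.η ((Y ⨿ (X ⨿ Z)) ⨿ (X ⨿ Z)))))))
            (h ≫ T.bind (coprod.desc
              (coprod.inl ≫ coprod.inl ≫ T.η ((Y ⨿ (X ⨿ Z)) ⨿ (X ⨿ Z)))
              ((coprod.inl : X ⟶ X ⨿ Z) ≫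
                (coprod.inr : X ⨿ Z ⟶ (Y ⨿ (X ⨿ Z)) ⨿ (X ⨿ Z)) ≫
                T.η ((Y ⨿ (X ⨿ Z)) ⨿ (X ⨿ Z)))))) ≫
            T.bind (coprod.desc (T.η (Y ⨿ (X ⨿ Z))) t) =
          h ≫ T.bind (coprod.desc (coprod.inl ≫ T.η (Y ⨿ (X ⨿ Z))) (coprod.inl ≫ t)) := by
      intro t
      simp only [Category.assoc, Category.id_comp, Category.comp_id, coprod.inl_desc,
      coprod.inr_desc, coprod.desc_comp, map_id_eq, desc_comp_inj, ← T.bind_comp,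
      T.η_bind, T.bind_η]
    conv_lhs => rw [T.iter_fixpoint _ h1N]
    rw [stepN, eq1N]
    simp only [Category.assoc, Category.id_comp, Category.comp_id, coprod.inl_desc,
      coprod.inr_desc, coprod.desc_comp, map_id_eq, desc_comp_inj, ← T.bind_comp,
      T.η_bind, T.bind_η]
  have eqN : T.iter _ h1N = coprod.desc
      (g ≫ T.bind (coprod.desc (coprod.inl ≫ T.η (Y ⨿ (X ⨿ Z)))
        ((h ≫ T.bind (coprod.desc (coprod.inl ≫ T.η (Y ⨿ Z)) g)) ≫
          T.bind (coprod.map (𝟙 Y) (coprod.inr : Z ⟶ X ⨿ Z) ≫ T.η (Y ⨿ (X ⨿ Z))))))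
      (((h ≫ T.bind (coprod.desc (coprod.inl ≫ T.η (Y ⨿ Z)) g)) ≫
        T.bind (coprod.desc (coprod.inl ≫ T.η (Y ⨿ Z))
          (h ≫ T.bind (coprod.desc (coprod.inl ≫ T.η (Y ⨿ Z)) g)))) ≫
        T.bind (coprod.map (𝟙 Y) (coprod.inr : Z ⟶ X ⨿ Z) ≫ T.η (Y ⨿ (X ⨿ Z)))) := by
    apply coprod.hom_ext
    · rw [eq1N, coprod.inl_desc]
    · rw [eq2N, coprod.inr_desc]
  have h2N : T.guarded (T.iter _ h1N)
      (coprod.inr : X ⨿ Z ⟶ Y ⨿ (X ⨿ Z)) coprod.inl := guard_eq T hAEg eqN.symm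
  have foldN_eq :
      (coprod.desc
        (g ≫ T.bind (coprod.desc
          (coprod.inl ≫ coprod.inl ≫ T.η ((Y ⨿ (X ⨿ Z)) ⨿ (X ⨿ Z)))
          ((h ≫ T.bind (coprod.desc (coprod.inl ≫ T.η (Y ⨿ Z)) g)) ≫
            T.bind (coprod.desc
              (coprod.inl ≫ coprod.inl ≫ T.η ((Y ⨿ (X ⨿ Z)) ⨿ (X ⨿ Z)))
              ((coprod.inr : Z ⟶ X ⨿ Z) ≫ (coprod.inr : X ⨿ Z ⟶ Y ⨿ (X ⨿ Z)) ≫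
                coprod.inl ≫ T.η ((Y ⨿ (X ⨿ Z)) ⨿ (X ⨿ Z)))))))
        (h ≫ T.bind (coprod.desc
          (coprod.inl ≫ coprod.inl ≫ T.η ((Y ⨿ (X ⨿ Z)) ⨿ (X ⨿ Z)))
          ((coprod.inl : X ⟶ X ⨿ Z) ≫
            (coprod.inr : X ⨿ Z ⟶ (Y ⨿ (X ⨿ Z)) ⨿ (X ⨿ Z)) ≫
            T.η ((Y ⨿ (X ⨿ Z)) ⨿ (X ⨿ Z)))))) ≫
        T.bind (coprod.desc (𝟙 (Y ⨿ (X ⨿ Z))) coprod.inr ≫ T.η (Y ⨿ (X ⨿ Z))) =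
      coprod.desc
        (g ≫ T.bind (coprod.desc (coprod.inl ≫ T.η (Y ⨿ (X ⨿ Z)))
          ((h ≫ T.bind (coprod.desc (coprod.inl ≫ T.η (Y ⨿ Z)) g)) ≫
            T.bind (coprod.map (𝟙 Y) (coprod.inr : Z ⟶ X ⨿ Z) ≫ T.η (Y ⨿ (X ⨿ Z))))))
        (h ≫ T.bind (coprod.map (𝟙 Y) (coprod.inl : X ⟶ X ⨿ Z) ≫ T.η (Y ⨿ (X ⨿ Z)))) := by
    simp only [Category.assoc, Category.id_comp, Category.comp_id, coprod.inl_desc,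
      coprod.inr_desc, coprod.desc_comp, map_id_eq, desc_comp_inj, ← T.bind_comp,
      T.η_bind, T.bind_η]
  have h3N := guard_eq T hθg foldN_eq.symm
  have codiagN := hcod (X ⨿ Z) Y _ h12N h1N h2N h3N
  -- the system N'
  have h1N' : T.guarded
      (coprod.desc
        (g ≫ T.bind (coprod.desc
          (coprod.inl ≫ coprod.inl ≫ T.η ((Y ⨿ (X ⨿ Z)) ⨿ (X ⨿ Z)))
          ((h ≫ T.bind (coprod.desc (coprod.inl ≫ T.η (Y ⨿ Z)) g)) ≫
            T.bind (coprod.desc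
              (coprod.inl ≫ coprod.inl ≫ T.η ((Y ⨿ (X ⨿ Z)) ⨿ (X ⨿ Z)))
              ((coprod.inr : Z ⟶ X ⨿ Z) ≫
                (coprod.inr : X ⨿ Z ⟶ (Y ⨿ (X ⨿ Z)) ⨿ (X ⨿ Z)) ≫
                T.η ((Y ⨿ (X ⨿ Z)) ⨿ (X ⨿ Z)))))))
        (h ≫ T.bind (coprod.desc
          (coprod.inl ≫ coprod.inl ≫ T.η ((Y ⨿ (X ⨿ Z)) ⨿ (X ⨿ Z)))
          ((coprod.inl : X ⟶ X ⨿ Z) ≫ (coprod.inr : X ⨿ Z ⟶ Y ⨿ (X ⨿ Z)) ≫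
            coprod.inl ≫ T.η ((Y ⨿ (X ⨿ Z)) ⨿ (X ⨿ Z))))))
      (coprod.inr : X ⨿ Z ⟶ (Y ⨿ (X ⨿ Z)) ⨿ (X ⨿ Z)) coprod.inl := by
    refine guard_desc T ?_ ?_
    · exact guard_any T g _ (guard_desc T
        (guard_pure T (cospan_inl_inr _ _) coprod.inl (by simp))
        (guard_bind T _ hv _ (guard_pure T (cospan_inl_inr _ _) coprod.inl (by simp))))
    · exact guard_bind T h hh _ (guard_pure T (cospan_inl_inr _ _) coprod.inl (by simp))
  have h12N' : T.guarded
      (coprod.desc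
        (g ≫ T.bind (coprod.desc
          (coprod.inl ≫ coprod.inl ≫ T.η ((Y ⨿ (X ⨿ Z)) ⨿ (X ⨿ Z)))
          ((h ≫ T.bind (coprod.desc (coprod.inl ≫ T.η (Y ⨿ Z)) g)) ≫
            T.bind (coprod.desc
              (coprod.inl ≫ coprod.inl ≫ T.η ((Y ⨿ (X ⨿ Z)) ⨿ (X ⨿ Z)))
              ((coprod.inr : Z ⟶ X ⨿ Z) ≫
                (coprod.inr : X ⨿ Z ⟶ (Y ⨿ (X ⨿ Z)) ⨿ (X ⨿ Z)) ≫
                T.η ((Y ⨿ (X ⨿ Z)) ⨿ (X ⨿ Z)))))))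
        (h ≫ T.bind (coprod.desc
          (coprod.inl ≫ coprod.inl ≫ T.η ((Y ⨿ (X ⨿ Z)) ⨿ (X ⨿ Z)))
          ((coprod.inl : X ⟶ X ⨿ Z) ≫ (coprod.inr : X ⨿ Z ⟶ Y ⨿ (X ⨿ Z)) ≫
            coprod.inl ≫ T.η ((Y ⨿ (X ⨿ Z)) ⨿ (X ⨿ Z))))))
      (coprod.desc (coprod.inr ≫ coprod.inl) coprod.inr :
        (X ⨿ Z) ⨿ (X ⨿ Z) ⟶ (Y ⨿ (X ⨿ Z)) ⨿ (X ⨿ Z))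
      (coprod.inl ≫ coprod.inl : Y ⟶ (Y ⨿ (X ⨿ Z)) ⨿ (X ⨿ Z)) := by
    refine guard_desc T ?_ ?_
    · exact guard_any T g _ (guard_desc T
        (guard_pure T (cospan_corner Y (X ⨿ Z)) (𝟙 Y) (by simp))
        (guard_bind T _ hv _ (guard_pure T (cospan_corner Y (X ⨿ Z)) (𝟙 Y) (by simp))))
    · exact guard_bind T h hh _ (guard_pure T (cospan_corner Y (X ⨿ Z)) (𝟙 Y) (by simp))
  have eq2N' : coprod.inr ≫ T.iter _ h1N' =
      h ≫ T.bind (coprod.map (𝟙 Y) (coprod.inl : X ⟶ X ⨿ Z) ≫ T.η (Y ⨿ (X ⨿ Z))) := by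
    conv_lhs => rw [T.iter_fixpoint _ h1N']
    simp only [Category.assoc, Category.id_comp, Category.comp_id, coprod.inl_desc,
      coprod.inr_desc, coprod.desc_comp, map_id_eq, desc_comp_inj, ← T.bind_comp,
      T.η_bind, T.bind_η]
  have eq1N' : coprod.inl ≫ T.iter _ h1N' =
      (g ≫ T.bind (coprod.desc (coprod.inl ≫ T.η (Y ⨿ X))
        (h ≫ T.bind (coprod.desc (coprod.inl ≫ T.η (Y ⨿ X))
          (g ≫ T.bind (coprod.desc (coprod.inl ≫ T.η (Y ⨿ X)) h)))))) ≫
        T.bind (coprod.map (𝟙 Y) (coprod.inl : X ⟶ X ⨿ Z) ≫ T.η (Y ⨿ (X ⨿ Z))) := by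
    have stepN' : ∀ t : (X ⨿ Z) ⟶ T.obj (Y ⨿ (X ⨿ Z)),
        coprod.inl ≫
          (coprod.desc
            (g ≫ T.bind (coprod.desc
              (coprod.inl ≫ coprod.inl ≫ T.η ((Y ⨿ (X ⨿ Z)) ⨿ (X ⨿ Z)))
              ((h ≫ T.bind (coprod.desc (coprod.inl ≫ T.η (Y ⨿ Z)) g)) ≫
                T.bind (coprod.desc
                  (coprod.inl ≫ coprod.inl ≫ T.η ((Y ⨿ (X ⨿ Z)) ⨿ (X ⨿ Z)))
                  ((coprod.inr : Z ⟶ X ⨿ Z) ≫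
                    (coprod.inr : X ⨿ Z ⟶ (Y ⨿ (X ⨿ Z)) ⨿ (X ⨿ Z)) ≫
                    T.η ((Y ⨿ (X ⨿ Z)) ⨿ (X ⨿ Z)))))))
            (h ≫ T.bind (coprod.desc
              (coprod.inl ≫ coprod.inl ≫ T.η ((Y ⨿ (X ⨿ Z)) ⨿ (X ⨿ Z)))
              ((coprod.inl : X ⟶ X ⨿ Z) ≫ (coprod.inr : X ⨿ Z ⟶ Y ⨿ (X ⨿ Z)) ≫
                coprod.inl ≫ T.η ((Y ⨿ (X ⨿ Z)) ⨿ (X ⨿ Z)))))) ≫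
            T.bind (coprod.desc (T.η (Y ⨿ (X ⨿ Z))) t) =
          g ≫ T.bind (coprod.desc (coprod.inl ≫ T.η (Y ⨿ (X ⨿ Z)))
            ((h ≫ T.bind (coprod.desc (coprod.inl ≫ T.η (Y ⨿ Z)) g)) ≫
              T.bind (coprod.desc (coprod.inl ≫ T.η (Y ⨿ (X ⨿ Z)))
                (coprod.inr ≫ t)))) := by
      intro t
      simp only [Category.assoc, Category.id_comp, Category.comp_id, coprod.inl_desc,
      coprod.inr_desc, coprod.desc_comp, map_id_eq, desc_comp_inj, ← T.bind_comp,
      T.η_bind, T.bind_η]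
    conv_lhs => rw [T.iter_fixpoint _ h1N']
    rw [stepN', eq2N']
    simp only [Category.assoc, Category.id_comp, Category.comp_id, coprod.inl_desc,
      coprod.inr_desc, coprod.desc_comp, map_id_eq, desc_comp_inj, ← T.bind_comp,
      T.η_bind, T.bind_η]
  have eqN' : T.iter _ h1N' = coprod.desc
      ((g ≫ T.bind (coprod.desc (coprod.inl ≫ T.η (Y ⨿ X))
        (h ≫ T.bind (coprod.desc (coprod.inl ≫ T.η (Y ⨿ X))
          (g ≫ T.bind (coprod.desc (coprod.inl ≫ T.η (Y ⨿ X)) h)))))) ≫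
        T.bind (coprod.map (𝟙 Y) (coprod.inl : X ⟶ X ⨿ Z) ≫ T.η (Y ⨿ (X ⨿ Z))))
      (h ≫ T.bind (coprod.map (𝟙 Y) (coprod.inl : X ⟶ X ⨿ Z) ≫ T.η (Y ⨿ (X ⨿ Z)))) := by
    apply coprod.hom_ext
    · rw [eq1N', coprod.inl_desc]
    · rw [eq2N', coprod.inr_desc]
  have h2N' : T.guarded (T.iter _ h1N')
      (coprod.inr : X ⨿ Z ⟶ Y ⨿ (X ⨿ Z)) coprod.inl := guard_eq T hΓg eqN'.symm
  have foldN'_eq :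
      (coprod.desc
        (g ≫ T.bind (coprod.desc
          (coprod.inl ≫ coprod.inl ≫ T.η ((Y ⨿ (X ⨿ Z)) ⨿ (X ⨿ Z)))
          ((h ≫ T.bind (coprod.desc (coprod.inl ≫ T.η (Y ⨿ Z)) g)) ≫
            T.bind (coprod.desc
              (coprod.inl ≫ coprod.inl ≫ T.η ((Y ⨿ (X ⨿ Z)) ⨿ (X ⨿ Z)))
              ((coprod.inr : Z ⟶ X ⨿ Z) ≫
                (coprod.inr : X ⨿ Z ⟶ (Y ⨿ (X ⨿ Z)) ⨿ (X ⨿ Z)) ≫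
                T.η ((Y ⨿ (X ⨿ Z)) ⨿ (X ⨿ Z)))))))
        (h ≫ T.bind (coprod.desc
          (coprod.inl ≫ coprod.inl ≫ T.η ((Y ⨿ (X ⨿ Z)) ⨿ (X ⨿ Z)))
          ((coprod.inl : X ⟶ X ⨿ Z) ≫ (coprod.inr : X ⨿ Z ⟶ Y ⨿ (X ⨿ Z)) ≫
            coprod.inl ≫ T.η ((Y ⨿ (X ⨿ Z)) ⨿ (X ⨿ Z)))))) ≫
        T.bind (coprod.desc (𝟙 (Y ⨿ (X ⨿ Z))) coprod.inr ≫ T.η (Y ⨿ (X ⨿ Z))) =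
      coprod.desc
        (g ≫ T.bind (coprod.desc (coprod.inl ≫ T.η (Y ⨿ (X ⨿ Z)))
          ((h ≫ T.bind (coprod.desc (coprod.inl ≫ T.η (Y ⨿ Z)) g)) ≫
            T.bind (coprod.map (𝟙 Y) (coprod.inr : Z ⟶ X ⨿ Z) ≫ T.η (Y ⨿ (X ⨿ Z))))))
        (h ≫ T.bind (coprod.map (𝟙 Y) (coprod.inl : X ⟶ X ⨿ Z) ≫ T.η (Y ⨿ (X ⨿ Z)))) := by
    simp only [Category.assoc, Category.id_comp, Category.comp_id, coprod.inl_desc,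
      coprod.inr_desc, coprod.desc_comp, map_id_eq, desc_comp_inj, ← T.bind_comp,
      T.η_bind, T.bind_η]
  have h3N' := guard_eq T hθg foldN'_eq.symm
  have codiagN' := hcod (X ⨿ Z) Y _ h12N' h1N' h2N' h3N'
  -- uniformity steps
  have U1 : coprod.inl ≫ T.iter _ hΓg = T.iter _ hutg := by
    refine hunif (X ⨿ Z) Y X _ hΓg _ hutg coprod.inl ?_
    rw [coprod.inl_desc]
  have U2 : coprod.inr ≫ T.iter _ hAEg = T.iter _ hv'g := by
    refine hunif (X ⨿ Z) Y Z _ hAEg _ hv'g coprod.inr ?_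
    rw [coprod.inr_desc]
  -- connecting the two systems through the common fold
  have chain1 : T.iter _ hθg = T.iter _ hAEg :=
    (iter_congr T hθg h3N foldN_eq.symm).trans (codiagN.trans (iter_congr T h2N hAEg eqN))
  have chain2 : T.iter _ hθg = T.iter _ hΓg :=
    (iter_congr T hθg h3N' foldN'_eq.symm).trans (codiagN'.trans (iter_congr T h2N' hΓg eqN'))
  -- compute the inl-component of the iterate of ⟨A, E⟩
  have F1 : coprod.inl ≫ T.iter _ hAEg =
      g ≫ T.bind (coprod.desc (T.η Y)
        ((h ≫ T.bind (coprod.desc (coprod.inl ≫ T.η (Y ⨿ Z)) g)) ≫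
          T.bind (coprod.desc (T.η Y) (T.iter _ hv'g)))) := by
    have stepAE : ∀ t : (X ⨿ Z) ⟶ T.obj Y,
        coprod.inl ≫
          (coprod.desc
            (g ≫ T.bind (coprod.desc (coprod.inl ≫ T.η (Y ⨿ (X ⨿ Z)))
              ((h ≫ T.bind (coprod.desc (coprod.inl ≫ T.η (Y ⨿ Z)) g)) ≫
                T.bind (coprod.map (𝟙 Y) (coprod.inr : Z ⟶ X ⨿ Z) ≫
                  T.η (Y ⨿ (X ⨿ Z))))))
            (((h ≫ T.bind (coprod.desc (coprod.inl ≫ T.η (Y ⨿ Z)) g)) ≫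
              T.bind (coprod.desc (coprod.inl ≫ T.η (Y ⨿ Z))
                (h ≫ T.bind (coprod.desc (coprod.inl ≫ T.η (Y ⨿ Z)) g)))) ≫
              T.bind (coprod.map (𝟙 Y) (coprod.inr : Z ⟶ X ⨿ Z) ≫
                T.η (Y ⨿ (X ⨿ Z))))) ≫
            T.bind (coprod.desc (T.η Y) t) =
          g ≫ T.bind (coprod.desc (T.η Y)
            ((h ≫ T.bind (coprod.desc (coprod.inl ≫ T.η (Y ⨿ Z)) g)) ≫
              T.bind (coprod.desc (T.η Y) (coprod.inr ≫ t)))) := by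
      intro t
      simp only [Category.assoc, Category.id_comp, Category.comp_id, coprod.inl_desc,
      coprod.inr_desc, coprod.desc_comp, map_id_eq, desc_comp_inj, ← T.bind_comp,
      T.η_bind, T.bind_η]
    conv_lhs => rw [T.iter_fixpoint _ hAEg]
    rw [stepAE, U2]
  -- unfoldings
  have uf_u := unfold_iter T hcod hunif _ hu hu'g
  have uf_v := unfold_iter T hcod hunif _ hv hv'g
  have ut_eq :
      (g ≫ T.bind (coprod.desc (coprod.inl ≫ T.η (Y ⨿ X))
        (h ≫ T.bind (coprod.desc (coprod.inl ≫ T.η (Y ⨿ X))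
          (g ≫ T.bind (coprod.desc (coprod.inl ≫ T.η (Y ⨿ X)) h)))))) =
      ((g ≫ T.bind (coprod.desc (coprod.inl ≫ T.η (Y ⨿ X)) h)) ≫
        T.bind (coprod.desc (coprod.inl ≫ T.η (Y ⨿ X))
          (g ≫ T.bind (coprod.desc (coprod.inl ≫ T.η (Y ⨿ X)) h)))) := by
    simp only [Category.assoc, Category.id_comp, Category.comp_id, coprod.inl_desc,
      coprod.inr_desc, coprod.desc_comp, map_id_eq, desc_comp_inj, ← T.bind_comp,
      T.η_bind, T.bind_η]
  calc T.iter _ hu = T.iter _ hu'g := uf_u.symm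
    _ = T.iter _ hutg := iter_congr T hu'g hutg ut_eq.symm
    _ = coprod.inl ≫ T.iter _ hΓg := U1.symm
    _ = coprod.inl ≫ T.iter _ hAEg := by rw [chain2.symm.trans chain1]
    _ = g ≫ T.bind (coprod.desc (T.η Y)
          ((h ≫ T.bind (coprod.desc (coprod.inl ≫ T.η (Y ⨿ Z)) g)) ≫
            T.bind (coprod.desc (T.η Y) (T.iter _ hv'g)))) := F1
    _ = g ≫ T.bind (coprod.desc (T.η Y)
          ((h ≫ T.bind (coprod.desc (coprod.inl ≫ T.η (Y ⨿ Z)) g)) ≫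
            T.bind (coprod.desc (T.η Y) (T.iter _ hv)))) := by rw [uf_v]
    _ = g ≫ T.bind (coprod.desc (T.η Y) (T.iter _ hv)) := by
          rw [← T.iter_fixpoint _ hv]

end DinatAux
/-- any guarded pre-iterative monad satisfying naturality, codiagonal and
uniformity also satisfies dinaturality. -/
theorem dinaturality_derivable {C : Type u} [Category.{v} C] [HasBinaryCoproducts C]
    (T : PIMonad C) (hnat : T.Naturality) (hcod : T.Codiagonal)
    (hunif : T.Uniformity) : T.Dinaturality := by
  intro X Y Z g h hor hu hv
  rcases hor with hg | hh
  · -- `g` is guarded: apply the core lemma with the roles of `g` and `h` swapped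
    have key := core T hcod hunif h g hg hv hu
    conv_lhs => rw [T.iter_fixpoint _ hu]
    rw [key]
    simp only [Category.assoc, Category.id_comp, Category.comp_id, coprod.inl_desc,
      coprod.inr_desc, coprod.desc_comp, map_id_eq, desc_comp_inj, ← T.bind_comp,
      T.η_bind, T.bind_η]
  · -- `h` is guarded: this is exactly the core lemma
    exact core T hcod hunif g h hh hu hv
end

section
/- Any guarded pre-iterative monad satisfying naturality, codiagonal, and uniformity also satisfies the Bekić identity: (T[id+inl, inr∘inr] ∘ [f, g])† = [h†, [η, h†]* ∘ g†], where f : X → T((Y+X)+Z) and g : Z → T((Y+X)+Z) are both guarded in the summand [inl∘inr, inr], and h = [η, g†]* ∘ f : X → T(Y+X) (which is then inr-guarded). -/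
open CategoryTheory CategoryTheory.Limits

attribute [simp] coprod.inl_desc coprod.inr_desc coprod.inl_desc_assoc coprod.inr_desc_assoc

universe v u

/-- The Bekić identity: `(T[id+inl, inr ∘ inr] ∘ [f, g])† = [h†, [η, h†]* ∘ g†]`, where
`f : X ⟶ T((Y+X)+Z)` and `g : Z ⟶ T((Y+X)+Z)` are both guarded in the summand
`[inl ∘ inr, inr]`, and `h = [η, g†]* ∘ f : X ⟶ T(Y+X)` (which is then inr-guarded). -/
def PIMonad.Bekic {C : Type u} [Category.{v} C] [HasBinaryCoproducts C]
    (T : PIMonad C) : Prop :=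
  ∀ (X Y Z : C) (f : X ⟶ T.obj ((Y ⨿ X) ⨿ Z)) (g : Z ⟶ T.obj ((Y ⨿ X) ⨿ Z))
    (_hf : T.guarded f
        (coprod.desc (coprod.inr ≫ coprod.inl) coprod.inr : X ⨿ Z ⟶ (Y ⨿ X) ⨿ Z)
        (coprod.inl ≫ coprod.inl : Y ⟶ (Y ⨿ X) ⨿ Z))
    (_hg : T.guarded g
        (coprod.desc (coprod.inr ≫ coprod.inl) coprod.inr : X ⨿ Z ⟶ (Y ⨿ X) ⨿ Z)
        (coprod.inl ≫ coprod.inl : Y ⟶ (Y ⨿ X) ⨿ Z))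
    (hg' : T.guarded g (coprod.inr : Z ⟶ (Y ⨿ X) ⨿ Z) coprod.inl)
    (hh : T.guarded (f ≫ T.bind (coprod.desc (T.η (Y ⨿ X)) (T.iter g hg')))
        (coprod.inr : X ⟶ Y ⨿ X) coprod.inl)
    (hL : T.guarded
        (coprod.desc f g ≫ T.bind (coprod.desc (coprod.map (𝟙 Y) coprod.inl)
          (coprod.inr ≫ coprod.inr) ≫ T.η (Y ⨿ (X ⨿ Z))))
        (coprod.inr : X ⨿ Z ⟶ Y ⨿ (X ⨿ Z)) coprod.inl),
    T.iter _ hL =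
      coprod.desc (T.iter _ hh)
        (T.iter g hg' ≫ T.bind (coprod.desc (T.η Y) (T.iter _ hh)))

namespace BekicAux

variable {C : Type u} [Category.{v} C]

lemma comp_bind_bind (T : GMonad C) {X Y Z W : C} (x : X ⟶ T.obj Y)
    (u : Y ⟶ T.obj Z) (v : Z ⟶ T.obj W) :
    (x ≫ T.bind u) ≫ T.bind v = x ≫ T.bind (u ≫ T.bind v) := by
  rw [T.bind_comp, Category.assoc]

lemma eta_bind' (T : GMonad C) {X Y Z : C} (u : X ⟶ Y) (v : Y ⟶ T.obj Z) :
    (u ≫ T.η Y) ≫ T.bind v = u ≫ v := by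
  rw [Category.assoc, T.η_bind]

lemma guarded_congr (T : GMonad C) {X Y' Y'' Y : C} {f f' : X ⟶ T.obj Y}
    {σ : Y' ⟶ Y} {σ' : Y'' ⟶ Y} (h : T.guarded f σ σ') (e : f = f') :
    T.guarded f' σ σ' := e ▸ h

variable [HasBinaryCoproducts C]

lemma iter_congr (T : PIMonad C) {X Y : C} {f f' : X ⟶ T.obj (Y ⨿ X)} (e : f = f')
    (hf : T.guarded f coprod.inr coprod.inl) (hf' : T.guarded f' coprod.inr coprod.inl) :
    T.iter f hf = T.iter f' hf' := by subst e; rfl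

lemma cospan_inl_inr (X Y : C) :
    IsCoprodCospan (coprod.inl : X ⟶ X ⨿ Y) (coprod.inr : Y ⟶ X ⨿ Y) :=
  ⟨coprodIsCoprod X Y⟩

lemma cospan_assoc (Y X Z : C) :
    IsCoprodCospan (coprod.inl ≫ coprod.inl : Y ⟶ (Y ⨿ X) ⨿ Z)
      (coprod.desc (coprod.inr ≫ coprod.inl) coprod.inr : X ⨿ Z ⟶ (Y ⨿ X) ⨿ Z) := by
  refine ⟨BinaryCofan.IsColimit.mk _
    (fun {T'} p q => coprod.desc (coprod.desc p (coprod.inl ≫ q)) (coprod.inr ≫ q))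
    (fun f g => by
      change (coprod.inl ≫ coprod.inl : Y ⟶ (Y ⨿ X) ⨿ Z) ≫
        coprod.desc (coprod.desc f (coprod.inl ≫ g)) (coprod.inr ≫ g) = f
      simp)
    (fun f g => by
      change (coprod.desc (coprod.inr ≫ coprod.inl) coprod.inr : X ⨿ Z ⟶ (Y ⨿ X) ⨿ Z) ≫
        coprod.desc (coprod.desc f (coprod.inl ≫ g)) (coprod.inr ≫ g) = g
      refine coprod.hom_ext ?_ ?_ <;> simp) ?_⟩
  intro T' f g m h1 h2
  change (Y ⨿ X) ⨿ Z ⟶ T' at m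
  change (coprod.inl ≫ coprod.inl : Y ⟶ (Y ⨿ X) ⨿ Z) ≫ m = f at h1
  change (coprod.desc (coprod.inr ≫ coprod.inl) coprod.inr : X ⨿ Z ⟶ (Y ⨿ X) ⨿ Z) ≫ m = g at h2
  show m = coprod.desc (coprod.desc f (coprod.inl ≫ g)) (coprod.inr ≫ g)
  have h2l := congrArg (fun t => (coprod.inl : X ⟶ X ⨿ Z) ≫ t) h2
  have h2r := congrArg (fun t => (coprod.inr : Z ⟶ X ⨿ Z) ≫ t) h2
  simp only [← Category.assoc, coprod.inl_desc, coprod.inr_desc] at h2l h2r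
  refine coprod.hom_ext (coprod.hom_ext ?_ ?_) ?_
  · simpa [← Category.assoc] using h1
  · simpa [← Category.assoc] using h2l
  · simpa [← Category.assoc] using h2r

set_option linter.unusedSectionVars false in
lemma guarded_factor (T : GMonad C) {X Y' Y'' Y : C} (σ : Y' ⟶ Y) (σ' : Y'' ⟶ Y)
    (hc : IsCoprodCospan σ' σ) (j : X ⟶ Y'') :
    T.guarded (j ≫ σ' ≫ T.η Y) σ σ' :=
  guarded_congr T (T.trv σ' σ hc (j ≫ T.η Y'')) (eta_bind' T j (σ' ≫ T.η Y))

lemma guarded_desc (T : GMonad C) {X Z V' V'' V : C} {σ : V' ⟶ V} {σ' : V'' ⟶ V}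
    {f : X ⟶ T.obj V} {g : Z ⟶ T.obj V} (hf : T.guarded f σ σ') (hg : T.guarded g σ σ') :
    T.guarded (coprod.desc f g) σ σ' :=
  T.par coprod.inl coprod.inr (cospan_inl_inr X Z) σ σ' (coprod.desc f g)
    (guarded_congr T hf (coprod.inl_desc f g).symm)
    (guarded_congr T hg (coprod.inr_desc f g).symm)

end BekicAux
/-- any guarded pre-iterative monad satisfying naturality, codiagonal and
uniformity also satisfies the Bekić identity. -/
theorem bekic_derivable {C : Type u} [Category.{v} C] [HasBinaryCoproducts C]
    (T : PIMonad C) (hnat : T.Naturality) (hcod : T.Codiagonal)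
    (hunif : T.Uniformity) : T.Bekic := by
  intro X Y Z f g _hf _hg hg' hh hL
  set gd : Z ⟶ T.obj (Y ⨿ X) := T.iter g hg' with hgd
  set h : X ⟶ T.obj (Y ⨿ X) := f ≫ T.bind (coprod.desc (T.η (Y ⨿ X)) gd) with hhdef
  set m : (Y ⨿ X) ⟶ T.obj (Y ⨿ (X ⨿ Z)) :=
    coprod.map (𝟙 Y) coprod.inl ≫ T.η (Y ⨿ (X ⨿ Z)) with hm
  set ρ : (Y ⨿ X) ⨿ Z ⟶ (Y ⨿ (X ⨿ Z)) ⨿ (X ⨿ Z) :=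
    coprod.desc (coprod.map (𝟙 Y) coprod.inl ≫ coprod.inl) (coprod.inr ≫ coprod.inr) with hρ
  set γ : (Y ⨿ X) ⨿ Z ⟶ (Y ⨿ (X ⨿ Z)) ⨿ Z :=
    coprod.desc (coprod.map (𝟙 Y) coprod.inl ≫ coprod.inl) coprod.inr with hγ
  set G : X ⨿ Z ⟶ T.obj ((Y ⨿ (X ⨿ Z)) ⨿ (X ⨿ Z)) :=
    coprod.desc f g ≫ T.bind (ρ ≫ T.η ((Y ⨿ (X ⨿ Z)) ⨿ (X ⨿ Z))) with hG
  set g' : Z ⟶ T.obj ((Y ⨿ (X ⨿ Z)) ⨿ Z) :=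
    g ≫ T.bind (γ ≫ T.η ((Y ⨿ (X ⨿ Z)) ⨿ Z)) with hg'def
  -- guardedness of G in the joint summand
  have h12 : T.guarded G
      (coprod.desc (coprod.inr ≫ coprod.inl) coprod.inr :
        (X ⨿ Z) ⨿ (X ⨿ Z) ⟶ (Y ⨿ (X ⨿ Z)) ⨿ (X ⨿ Z))
      (coprod.inl ≫ coprod.inl : Y ⟶ (Y ⨿ (X ⨿ Z)) ⨿ (X ⨿ Z)) := by
    rw [hG]
    refine T.cmp (coprod.inl ≫ coprod.inl) (coprod.desc (coprod.inr ≫ coprod.inl) coprod.inr)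
      (BekicAux.cospan_assoc Y X Z) _ _ (coprod.desc f g) (ρ ≫ T.η _)
      (BekicAux.guarded_desc T.toGMonad _hf _hg) ?_
    refine BekicAux.guarded_congr T.toGMonad
      (BekicAux.guarded_factor T.toGMonad _ _ (BekicAux.cospan_assoc Y (X ⨿ Z) (X ⨿ Z)) (𝟙 Y)) ?_
    rw [hρ]; simp
  -- guardedness of G in the inner summand
  have h1 : T.guarded G (coprod.inr : X ⨿ Z ⟶ (Y ⨿ (X ⨿ Z)) ⨿ (X ⨿ Z)) coprod.inl := by
    have inner : T.guarded ((coprod.inl ≫ coprod.inl) ≫ T.η ((Y ⨿ (X ⨿ Z)) ⨿ (X ⨿ Z)))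
        (coprod.inr : X ⨿ Z ⟶ (Y ⨿ (X ⨿ Z)) ⨿ (X ⨿ Z)) coprod.inl := by
      refine BekicAux.guarded_congr T.toGMonad
        (BekicAux.guarded_factor T.toGMonad _ _
          (BekicAux.cospan_inl_inr (Y ⨿ (X ⨿ Z)) (X ⨿ Z)) (coprod.inl : Y ⟶ Y ⨿ (X ⨿ Z))) ?_
      simp
    have step := T.cmp (coprod.inl ≫ coprod.inl)
      (coprod.desc (coprod.inr ≫ coprod.inl) coprod.inr)
      (BekicAux.cospan_assoc Y (X ⨿ Z) (X ⨿ Z)) coprod.inr coprod.inl G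
      (T.η _) h12 inner
    refine BekicAux.guarded_congr T.toGMonad step ?_
    rw [T.bind_η]; simp
  -- guardedness of g'
  have hg'' : T.guarded g' (coprod.inr : Z ⟶ (Y ⨿ (X ⨿ Z)) ⨿ Z) coprod.inl := by
    rw [hg'def]
    refine T.cmp coprod.inl coprod.inr (BekicAux.cospan_inl_inr (Y ⨿ X) Z) _ _ g
      (γ ≫ T.η _) hg' ?_
    refine BekicAux.guarded_congr T.toGMonad
      (BekicAux.guarded_factor T.toGMonad _ _ (BekicAux.cospan_inl_inr (Y ⨿ (X ⨿ Z)) Z)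
        (coprod.map (𝟙 Y) coprod.inl)) ?_
    rw [hγ]; simp
  -- uniformity: the inner component of iter G
  have lab1 : γ ≫ coprod.map (𝟙 (Y ⨿ (X ⨿ Z))) (coprod.inr : Z ⟶ X ⨿ Z) = ρ := by
    rw [hγ, hρ]; apply coprod.hom_ext <;> simp
  have unif_cond : coprod.inr ≫ G =
      g' ≫ T.bind (coprod.map (𝟙 (Y ⨿ (X ⨿ Z))) coprod.inr ≫ T.η ((Y ⨿ (X ⨿ Z)) ⨿ (X ⨿ Z))) := by
    rw [hG, hg'def]
    rw [BekicAux.comp_bind_bind, BekicAux.eta_bind']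
    rw [← lab1]
    simp [Category.assoc]
  have step_r : coprod.inr ≫ T.iter G h1 = T.iter g' hg'' :=
    hunif (X ⨿ Z) (Y ⨿ (X ⨿ Z)) Z G h1 g' hg'' coprod.inr unif_cond
  -- naturality: iter g' equals gd postcomposed
  have e7 : g ≫ T.bind (coprod.desc
        ((coprod.map (𝟙 Y) coprod.inl ≫ T.η (Y ⨿ (X ⨿ Z))) ≫
          T.bind (coprod.inl ≫ T.η ((Y ⨿ (X ⨿ Z)) ⨿ Z)))
        (coprod.inr ≫ T.η ((Y ⨿ (X ⨿ Z)) ⨿ Z))) = g' := by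
    rw [hg'def, hγ, BekicAux.eta_bind']
    simp [Category.assoc]
  have h' : T.guarded (g ≫ T.bind (coprod.desc
        ((coprod.map (𝟙 Y) coprod.inl ≫ T.η (Y ⨿ (X ⨿ Z))) ≫
          T.bind (coprod.inl ≫ T.η ((Y ⨿ (X ⨿ Z)) ⨿ Z)))
        (coprod.inr ≫ T.η ((Y ⨿ (X ⨿ Z)) ⨿ Z))))
      (coprod.inr : Z ⟶ (Y ⨿ (X ⨿ Z)) ⨿ Z) coprod.inl :=
    BekicAux.guarded_congr T.toGMonad hg'' e7.symm
  have nat := hnat Z (Y ⨿ X) (Y ⨿ (X ⨿ Z)) g hg'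
    (coprod.map (𝟙 Y) coprod.inl ≫ T.η (Y ⨿ (X ⨿ Z))) h'
  have step_r' : coprod.inr ≫ T.iter G h1 = gd ≫ T.bind m := by
    rw [step_r, BekicAux.iter_congr T e7.symm hg'' h', ← nat, hgd, hm]
  -- the inner iteration computed
  have key : ρ ≫ coprod.desc (T.η (Y ⨿ (X ⨿ Z))) (T.iter G h1) = coprod.desc m (gd ≫ T.bind m) := by
    rw [hρ]
    apply coprod.hom_ext
    · simp [hm]
    · simpa using step_r'
  have hfix := T.iter_fixpoint G h1
  have step_l : coprod.inl ≫ T.iter G h1 = h ≫ T.bind m := by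
    conv_lhs => rw [hfix]
    nth_rewrite 1 [hG]
    rw [hhdef]
    simp only [BekicAux.comp_bind_bind, BekicAux.eta_bind', coprod.inl_desc_assoc,
      coprod.desc_comp, T.η_bind]
    rw [key, coprod.inl_desc]
  have claim2 : T.iter G h1 = coprod.desc h gd ≫ T.bind m := by
    apply coprod.hom_ext
    · rw [step_l]; simp
    · rw [step_r']; simp
  -- guardedness of iter G
  have h2 : T.guarded (T.iter G h1) (coprod.inr : X ⨿ Z ⟶ Y ⨿ (X ⨿ Z)) coprod.inl := by
    have inner : T.guarded ((coprod.inl ≫ coprod.inl) ≫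
        coprod.desc (T.η (Y ⨿ (X ⨿ Z))) (T.iter G h1))
        (coprod.inr : X ⨿ Z ⟶ Y ⨿ (X ⨿ Z)) coprod.inl := by
      refine BekicAux.guarded_congr T.toGMonad
        (BekicAux.guarded_factor T.toGMonad _ _ (BekicAux.cospan_inl_inr Y (X ⨿ Z)) (𝟙 Y)) ?_
      simp
    have step := T.cmp (coprod.inl ≫ coprod.inl)
      (coprod.desc (coprod.inr ≫ coprod.inl) coprod.inr)
      (BekicAux.cospan_assoc Y (X ⨿ Z) (X ⨿ Z)) coprod.inr coprod.inl G
      (coprod.desc (T.η _) (T.iter G h1)) h12 inner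
    exact BekicAux.guarded_congr T.toGMonad step hfix.symm
  -- merging both copies gives the Bekić left-hand side
  have lab2 : ρ ≫ coprod.desc (𝟙 (Y ⨿ (X ⨿ Z))) coprod.inr =
      coprod.desc (coprod.map (𝟙 Y) coprod.inl) (coprod.inr ≫ coprod.inr) := by
    rw [hρ]; apply coprod.hom_ext <;> simp
  have claim1 : G ≫ T.bind (coprod.desc (𝟙 (Y ⨿ (X ⨿ Z))) coprod.inr ≫ T.η (Y ⨿ (X ⨿ Z))) =
      coprod.desc f g ≫ T.bind (coprod.desc (coprod.map (𝟙 Y) coprod.inl)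
        (coprod.inr ≫ coprod.inr) ≫ T.η (Y ⨿ (X ⨿ Z))) := by
    rw [hG, BekicAux.comp_bind_bind, BekicAux.eta_bind', ← lab2]
    simp only [Category.assoc]
  have h3 : T.guarded (G ≫ T.bind (coprod.desc (𝟙 (Y ⨿ (X ⨿ Z))) coprod.inr ≫
        T.η (Y ⨿ (X ⨿ Z)))) (coprod.inr : X ⨿ Z ⟶ Y ⨿ (X ⨿ Z)) coprod.inl :=
    BekicAux.guarded_congr T.toGMonad hL claim1.symm
  have codiag := hcod (X ⨿ Z) Y G h12 h1 h2 h3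
  -- transport along claim2
  have h2p : T.guarded (coprod.desc h gd ≫ T.bind m)
      (coprod.inr : X ⨿ Z ⟶ Y ⨿ (X ⨿ Z)) coprod.inl :=
    BekicAux.guarded_congr T.toGMonad h2 claim2
  -- components of the final iteration
  have fin_l : coprod.inl ≫ T.iter (coprod.desc h gd ≫ T.bind m) h2p = T.iter h hh := by
    refine hunif (X ⨿ Z) Y X (coprod.desc h gd ≫ T.bind m) h2p h hh coprod.inl ?_
    rw [hm]; simp
  have pfix := T.iter_fixpoint (coprod.desc h gd ≫ T.bind m) h2p
  have fin_r : coprod.inr ≫ T.iter (coprod.desc h gd ≫ T.bind m) h2p =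
      gd ≫ T.bind (coprod.desc (T.η Y) (T.iter h hh)) := by
    conv_lhs => rw [pfix]
    calc coprod.inr ≫ (coprod.desc h gd ≫ T.bind m) ≫
          T.bind (coprod.desc (T.η Y) (T.iter (coprod.desc h gd ≫ T.bind m) h2p))
        = gd ≫ T.bind (m ≫
            T.bind (coprod.desc (T.η Y) (T.iter (coprod.desc h gd ≫ T.bind m) h2p))) := by
          rw [BekicAux.comp_bind_bind]; simp
      _ = gd ≫ T.bind (coprod.desc (T.η Y)
            (coprod.inl ≫ T.iter (coprod.desc h gd ≫ T.bind m) h2p)) := by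
          nth_rewrite 1 [hm]
          rw [BekicAux.eta_bind']; simp
      _ = gd ≫ T.bind (coprod.desc (T.η Y) (T.iter h hh)) := by rw [fin_l]
  -- assemble
  rw [← BekicAux.iter_congr T claim1 h3 hL, codiag, BekicAux.iter_congr T claim2 h2 h2p]
  apply coprod.hom_ext
  · rw [fin_l, coprod.inl_desc]
  · rw [fin_r, coprod.inr_desc]
end

section
/- Every guarded iterative monad (with f† the unique solution of each inr-guarded f) validates all iteration laws: naturality, dinaturality, codiagonal, and uniformity. -/
open CategoryTheory CategoryTheory.Limits

universe v u

section Aux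

variable {C : Type u} [Category.{v} C]

/-- Kleisli associativity in composed form. -/
theorem KMonad.comp_bind_bind (T : KMonad C) {A X Y Z : C} (f : A ⟶ T.obj X)
    (g : X ⟶ T.obj Y) (h : Y ⟶ T.obj Z) :
    f ≫ T.bind g ≫ T.bind h = f ≫ T.bind (g ≫ T.bind h) := by
  rw [T.bind_comp]

theorem KMonad.eta_comp_bind (T : KMonad C) {A X Y : C} (f : A ⟶ X)
    (g : X ⟶ T.obj Y) : f ≫ T.η X ≫ T.bind g = f ≫ g := by
  rw [T.η_bind]

end Aux

/-- every guarded iterative monad (where `f†` is the unique solution of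
each inr-guarded `f`) validates all iteration laws: naturality, dinaturality,
codiagonal, and uniformity. -/
theorem iterative_validates_iteration_laws {C : Type u} [Category.{v} C]
    [HasBinaryCoproducts C] (T : IMonad C) :
    T.toPIMonad.Naturality ∧ T.toPIMonad.Dinaturality ∧
      T.toPIMonad.Codiagonal ∧ T.toPIMonad.Uniformity := by
  refine ⟨?_, ?_, ?_, ?_⟩
  · -- Naturality
    intro X Y Z f hf g h'
    refine T.iter_unique _ h' _ ?_
    conv_lhs => rw [T.iter_fixpoint f hf]
    simp only [Category.assoc, KMonad.comp_bind_bind, coprod.desc_comp,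
      coprod.inl_desc, coprod.inr_desc, KMonad.eta_comp_bind, T.η_bind,
      T.bind_η, Category.comp_id, Category.id_comp]
  · -- Dinaturality
    intro X Y Z g h _ hu hv
    refine (T.iter_unique _ hu _ ?_).symm
    conv_lhs => rw [T.iter_fixpoint _ hv]
    simp only [Category.assoc, KMonad.comp_bind_bind, coprod.desc_comp,
      coprod.inl_desc, coprod.inr_desc, KMonad.eta_comp_bind, T.η_bind,
      T.bind_η, Category.comp_id, Category.id_comp]
  · -- Codiagonal
    intro X Y f _h12 h1 h2 h3
    refine (T.iter_unique _ h3 _ ?_).symm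
    set s := T.iter (T.iter f h1) h2 with hs
    have key : s = T.iter f h1 ≫ T.bind (coprod.desc (T.η Y) s) :=
      T.iter_fixpoint _ h2
    conv_lhs => rw [key, T.iter_fixpoint f h1]
    simp only [Category.assoc, KMonad.comp_bind_bind, coprod.desc_comp,
      coprod.inl_desc, coprod.inr_desc, KMonad.eta_comp_bind, T.η_bind,
      T.bind_η, Category.comp_id, Category.id_comp]
    rw [← key]
  · -- Uniformity
    intro X Y Z f hf g hg h heq
    refine T.iter_unique g hg _ ?_
    conv_lhs => rw [T.iter_fixpoint f hf, ← Category.assoc, heq]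
    simp only [Category.assoc, KMonad.comp_bind_bind, coprod.desc_comp,
      coprod.inl_desc, coprod.inr_desc, coprod.map_desc, KMonad.eta_comp_bind,
      T.η_bind, T.bind_η, Category.comp_id, Category.id_comp]
end

section
/- Let ρ : T → S be a guarded retraction between guarded monads, witnessed by a family υ_X : SX → TX, and suppose T is guarded pre-iterative with iteration operator (-)†. Then S is guarded pre-iterative with the iteration operator f‡ = ρ ∘ (υ∘f)†; that is, for every inr-guarded f : X → S(Y+X), the morphism ρ∘(υ∘f)† satisfies the fixpoint identity ρ∘(υ∘f)† = [η, ρ∘(υ∘f)†]* ∘ f. -/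
open CategoryTheory CategoryTheory.Limits

universe v u

/-- if `ρ : T ⟶ S` is a guarded retraction (witnessed by a family
`υ_X : S X ⟶ T X` preserving guardedness, with `ρ ∘ υ = id`) and `T` is guarded
pre-iterative, then `S` is guarded pre-iterative with iteration `f‡ = ρ ∘ (υ ∘ f)†`:
for every inr-guarded `f : X ⟶ S(Y+X)`, the morphism `ρ ∘ (υ ∘ f)†` satisfies
the fixpoint identity for `f`. -/
theorem guarded_retraction_transfers_iteration {C : Type u} [Category.{v} C]
    [HasBinaryCoproducts C] (T : PIMonad C) (S : GMonad C)
    (ρ : KMonadHom T.toKMonad S.toKMonad)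
    (υ : ∀ X : C, S.obj X ⟶ T.obj X)
    (hυ : ∀ (X Y' Y'' Y : C) (f : X ⟶ S.obj Y) (σ : Y' ⟶ Y) (σ' : Y'' ⟶ Y),
        S.guarded f σ σ' → T.guarded (f ≫ υ Y) σ σ')
    (hρυ : ∀ X : C, υ X ≫ ρ.app X = 𝟙 (S.obj X))
    (X Y : C) (f : X ⟶ S.obj (Y ⨿ X))
    (hf : S.guarded f (coprod.inr : X ⟶ Y ⨿ X) coprod.inl) :
    T.iter (f ≫ υ (Y ⨿ X)) (hυ X X Y (Y ⨿ X) f coprod.inr coprod.inl hf) ≫ ρ.app Y =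
      f ≫ S.bind (coprod.desc (S.η Y)
        (T.iter (f ≫ υ (Y ⨿ X)) (hυ X X Y (Y ⨿ X) f coprod.inr coprod.inl hf) ≫
          ρ.app Y)) := by
  conv_lhs => rw [T.iter_fixpoint]
  rw [Category.assoc, ρ.app_bind, Category.assoc, ← Category.assoc (υ _),
    hρυ, Category.id_comp]
  congr 2
  ext
  · simp [ρ.app_η Y]
  · simp [ρ.app_η Y]
end

section
/- Let # : C × C → C be a guarded parametrized monad (each #(-,X) is a guarded monad and each #(-,f) is a guarded monad morphism for f : X → Y) such that for every X the final coalgebra F# X = νγ.#(X,γ) of #(X,-) exists. Then F# carries a monad structure (with unit and Kleisli lifting determined by finality as in Uustalu's construction), and it is a guarded monad when f : X → F# Y is declared σ-guarded iff out∘f : X → #(Y, F# Y) is σ-guarded. Moreover, if each monad #(-,X) is guarded iterative, then F# is guarded iterative. -/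
/-!
Statement 15: Let `#` be a guarded parametrized monad on `C` (each `#(-,P)` a guarded
monad, each `#(id,p)` a guarded monad morphism) such that each final coalgebra
`F# X = νγ. #(X,γ)` exists. Then `F#` carries a monad structure (characterized via
finality as in Uustalu's construction), it is a guarded monad with `f : X ⟶ F# Y`
declared `σ`-guarded iff `out ∘ f` is `σ`-guarded, and if each `#(-,P)` is guarded
iterative then so is `F#`.
-/

open CategoryTheory CategoryTheory.Limits

universe v u

/-- A guarded parametrized monad `# : C × C → C`: for each parameter `P`, a guarded
monad `#(-,P)` (in Kleisli-triple form, with a guardedness relation closed under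
(trv), (par), (cmp)), and for each `p : P ⟶ Q` a guarded monad morphism
`#(id,p) : #(-,P) ⟶ #(-,Q)`. -/
structure PGMonad (C : Type u) [Category.{v} C] where
  obj : C → C → C
  η : ∀ X P : C, X ⟶ obj X P
  bind : ∀ {X Y : C} (P : C), (X ⟶ obj Y P) → (obj X P ⟶ obj Y P)
  η_bind : ∀ {X Y : C} (P : C) (f : X ⟶ obj Y P), η X P ≫ bind P f = f
  bind_η : ∀ X P : C, bind P (η X P) = 𝟙 (obj X P)
  bind_comp : ∀ {X Y Z : C} (P : C) (f : X ⟶ obj Y P) (g : Y ⟶ obj Z P),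
      bind P (f ≫ bind P g) = bind P f ≫ bind P g
  /-- Functorial action in the parameter. -/
  pmap : ∀ (X : C) {P Q : C}, (P ⟶ Q) → (obj X P ⟶ obj X Q)
  pmap_id : ∀ X P : C, pmap X (𝟙 P) = 𝟙 (obj X P)
  pmap_comp : ∀ (X : C) {P Q R : C} (p : P ⟶ Q) (q : Q ⟶ R),
      pmap X (p ≫ q) = pmap X p ≫ pmap X q
  /-- `#(id,p)` is a monad morphism: compatibility with units. -/
  pmap_η : ∀ (X : C) {P Q : C} (p : P ⟶ Q), η X P ≫ pmap X p = η X Q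
  /-- `#(id,p)` is a monad morphism: compatibility with Kleisli lifting. -/
  pmap_bind : ∀ {X Y : C} {P Q : C} (p : P ⟶ Q) (f : X ⟶ obj Y P),
      bind P f ≫ pmap Y p = pmap X p ≫ bind Q (f ≫ pmap Y p)
  /-- Guardedness on the Kleisli category of `#(-,P)`. -/
  guarded : ∀ {X Y' Y'' Y : C} (P : C), (X ⟶ obj Y P) → (Y' ⟶ Y) → (Y'' ⟶ Y) → Prop
  trv : ∀ (W : C) {X Y Z V : C} (i₁ : Y ⟶ V) (i₂ : Z ⟶ V), IsCoprodCospan i₁ i₂ →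
      ∀ f : X ⟶ obj Y W, guarded W (f ≫ bind W (i₁ ≫ η V W)) i₂ i₁
  par : ∀ (W : C) {X Y V Z' Z'' Z : C} (j₁ : X ⟶ V) (j₂ : Y ⟶ V), IsCoprodCospan j₁ j₂ →
      ∀ (σ : Z' ⟶ Z) (σ' : Z'' ⟶ Z) (u : V ⟶ obj Z W),
      guarded W (j₁ ≫ u) σ σ' → guarded W (j₂ ≫ u) σ σ' → guarded W u σ σ'
  cmp : ∀ (W : C) {X Y Z V U' U'' U : C} (i₁ : Y ⟶ V) (i₂ : Z ⟶ V), IsCoprodCospan i₁ i₂ →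
      ∀ (σ : U' ⟶ U) (σ' : U'' ⟶ U) (f : X ⟶ obj V W) (u : V ⟶ obj U W),
      guarded W f i₂ i₁ → guarded W (i₁ ≫ u) σ σ' → guarded W (f ≫ bind W u) σ σ'
  /-- `#(id,p)` is a guarded monad morphism. -/
  pmap_guarded : ∀ {P Q : C} (p : P ⟶ Q) {X Y' Y'' Y : C} (f : X ⟶ obj Y P)
      (σ : Y' ⟶ Y) (σ' : Y'' ⟶ Y),
      guarded P f σ σ' → guarded Q (f ≫ pmap Y p) σ σ'

section Aux

variable {C : Type u} [Category.{v} C] [HasBinaryCoproducts C] (H : PGMonad C)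
  (Fobj : C → C) (out : ∀ X : C, Fobj X ⟶ H.obj X (Fobj X))
  (hfinal : ∀ (X A : C) (c : A ⟶ H.obj X A),
      ∃! h : A ⟶ Fobj X, h ≫ out X = c ≫ H.pmap X h)

include hfinal

set_option linter.unusedSectionVars false

/-- The coiterator into the final coalgebra. -/
noncomputable def coitAux (X A : C) (c : A ⟶ H.obj X A) : A ⟶ Fobj X :=
  (hfinal X A c).choose

theorem coitAux_spec (X A : C) (c : A ⟶ H.obj X A) :
    coitAux H Fobj out hfinal X A c ≫ out X =
      c ≫ H.pmap X (coitAux H Fobj out hfinal X A c) :=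
  (hfinal X A c).choose_spec.1

theorem coalg_uniq {X A : C} (c : A ⟶ H.obj X A) {h₁ h₂ : A ⟶ Fobj X}
    (e₁ : h₁ ≫ out X = c ≫ H.pmap X h₁) (e₂ : h₂ ≫ out X = c ≫ H.pmap X h₂) :
    h₁ = h₂ :=
  (hfinal X A c).unique e₁ e₂

theorem endo_id {X : C} {g : Fobj X ⟶ Fobj X}
    (e : g ≫ out X = out X ≫ H.pmap X g) : g = 𝟙 (Fobj X) :=
  coalg_uniq H Fobj out hfinal (out X) e (by rw [H.pmap_id]; simp)

/-- `out` is (split) mono, by Lambek's lemma. -/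
theorem out_cancel {X A : C} {h₁ h₂ : A ⟶ Fobj X}
    (e : h₁ ≫ out X = h₂ ≫ out X) : h₁ = h₂ := by
  obtain ⟨t, ht, -⟩ := hfinal X (H.obj X (Fobj X)) (H.pmap X (out X))
  have hid : out X ≫ t = 𝟙 _ := by
    apply endo_id H Fobj out hfinal
    calc (out X ≫ t) ≫ out X = out X ≫ (H.pmap X (out X) ≫ H.pmap X t) := by
          rw [Category.assoc, ht]
      _ = out X ≫ H.pmap X (out X ≫ t) := by rw [← H.pmap_comp]
  have : h₁ ≫ out X ≫ t = h₂ ≫ out X ≫ t := by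
    rw [← Category.assoc, e, Category.assoc]
  simpa [hid] using this

/-- The unit of the resumption monad. -/
noncomputable def etaNu (X : C) : X ⟶ Fobj X :=
  coitAux H Fobj out hfinal X X (H.η X X)

theorem etaNu_out (X : C) :
    etaNu H Fobj out hfinal X ≫ out X = H.η X (Fobj X) := by
  have h := coitAux_spec H Fobj out hfinal X X (H.η X X)
  rw [H.pmap_η] at h
  exact h

/-- The coalgebra used to define the Kleisli lifting. -/
noncomputable def bindCoalg {X Y : C} (f : X ⟶ Fobj Y) :
    (Fobj X ⨿ Fobj Y) ⟶ H.obj Y (Fobj X ⨿ Fobj Y) :=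
  coprod.desc
    (out X ≫ H.pmap X coprod.inl ≫
      H.bind (Fobj X ⨿ Fobj Y) (f ≫ out Y ≫ H.pmap Y coprod.inr))
    (out Y ≫ H.pmap Y coprod.inr)

/-- The Kleisli lifting of the resumption monad. -/
noncomputable def bindNu {X Y : C} (f : X ⟶ Fobj Y) : Fobj X ⟶ Fobj Y :=
  coprod.inl ≫ coitAux H Fobj out hfinal Y _ (bindCoalg H Fobj out f)

theorem bindNu_inr {X Y : C} (f : X ⟶ Fobj Y) :
    coprod.inr ≫ coitAux H Fobj out hfinal Y _ (bindCoalg H Fobj out f)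
      = 𝟙 (Fobj Y) := by
  set k := coitAux H Fobj out hfinal Y _ (bindCoalg H Fobj out f) with hk
  apply endo_id H Fobj out hfinal
  calc (coprod.inr ≫ k) ≫ out Y = coprod.inr ≫ (k ≫ out Y) := by
        rw [Category.assoc]
    _ = coprod.inr ≫ bindCoalg H Fobj out f ≫ H.pmap Y k := by
        rw [coitAux_spec]
    _ = out Y ≫ H.pmap Y coprod.inr ≫ H.pmap Y k := by
        rw [bindCoalg, coprod.inr_desc_assoc]; simp only [Category.assoc]
    _ = out Y ≫ H.pmap Y (coprod.inr ≫ k) := by rw [← H.pmap_comp]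

theorem bindNu_out {X Y : C} (f : X ⟶ Fobj Y) :
    bindNu H Fobj out hfinal f ≫ out Y =
      out X ≫ H.pmap X (bindNu H Fobj out hfinal f) ≫
        H.bind (Fobj Y) (f ≫ out Y) := by
  set k := coitAux H Fobj out hfinal Y _ (bindCoalg H Fobj out f) with hk
  have hspec : k ≫ out Y = bindCoalg H Fobj out f ≫ H.pmap Y k := by
    rw [hk]; exact coitAux_spec H Fobj out hfinal Y _ _
  have hinr : coprod.inr ≫ k = 𝟙 (Fobj Y) := bindNu_inr H Fobj out hfinal f
  calc bindNu H Fobj out hfinal f ≫ out Y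
      = coprod.inl ≫ (k ≫ out Y) := by rw [bindNu, Category.assoc]
    _ = coprod.inl ≫ bindCoalg H Fobj out f ≫ H.pmap Y k := by rw [hspec]
    _ = out X ≫ H.pmap X coprod.inl ≫
          (H.bind (Fobj X ⨿ Fobj Y) (f ≫ out Y ≫ H.pmap Y coprod.inr) ≫
            H.pmap Y k) := by
        rw [bindCoalg, coprod.inl_desc_assoc]; simp only [Category.assoc]
    _ = out X ≫ H.pmap X coprod.inl ≫ H.pmap X k ≫
          H.bind (Fobj Y) ((f ≫ out Y ≫ H.pmap Y coprod.inr) ≫ H.pmap Y k) := by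
        rw [H.pmap_bind]
    _ = out X ≫ H.pmap X (coprod.inl ≫ k) ≫
          H.bind (Fobj Y) (f ≫ out Y ≫ H.pmap Y (coprod.inr ≫ k)) := by
        rw [H.pmap_comp, H.pmap_comp]
        simp only [Category.assoc]
    _ = out X ≫ H.pmap X (bindNu H Fobj out hfinal f) ≫
          H.bind (Fobj Y) (f ≫ out Y) := by
        rw [hinr, H.pmap_id, Category.comp_id, bindNu, hk]

theorem bindNu_uniq {X Y : C} (f : X ⟶ Fobj Y) {h : Fobj X ⟶ Fobj Y}
    (e : h ≫ out Y = out X ≫ H.pmap X h ≫ H.bind (Fobj Y) (f ≫ out Y)) :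
    h = bindNu H Fobj out hfinal f := by
  set k := coitAux H Fobj out hfinal Y _ (bindCoalg H Fobj out f) with hk
  have hspec : k ≫ out Y = bindCoalg H Fobj out f ≫ H.pmap Y k := by
    rw [hk]; exact coitAux_spec H Fobj out hfinal Y _ _
  have key : coprod.desc h (𝟙 (Fobj Y)) = k := by
    apply coalg_uniq H Fobj out hfinal (bindCoalg H Fobj out f) _ hspec
    apply coprod.hom_ext
    · -- inl component
      calc coprod.inl ≫ coprod.desc h (𝟙 (Fobj Y)) ≫ out Y
          = h ≫ out Y := by rw [coprod.inl_desc_assoc]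
        _ = out X ≫ H.pmap X h ≫ H.bind (Fobj Y) (f ≫ out Y) := e
        _ = out X ≫ H.pmap X (coprod.inl ≫ coprod.desc h (𝟙 (Fobj Y))) ≫
              H.bind (Fobj Y)
                (f ≫ out Y ≫ H.pmap Y (coprod.inr ≫ coprod.desc h (𝟙 (Fobj Y)))) := by
            rw [coprod.inl_desc, coprod.inr_desc, H.pmap_id, Category.comp_id]
        _ = out X ≫ H.pmap X coprod.inl ≫
              H.pmap X (coprod.desc h (𝟙 (Fobj Y))) ≫
              H.bind (Fobj Y)
                ((f ≫ out Y ≫ H.pmap Y coprod.inr) ≫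
                  H.pmap Y (coprod.desc h (𝟙 (Fobj Y)))) := by
            rw [H.pmap_comp, H.pmap_comp]
            simp only [Category.assoc]
        _ = out X ≫ H.pmap X coprod.inl ≫
              H.bind (Fobj X ⨿ Fobj Y) (f ≫ out Y ≫ H.pmap Y coprod.inr) ≫
              H.pmap Y (coprod.desc h (𝟙 (Fobj Y))) := by
            rw [H.pmap_bind]
        _ = coprod.inl ≫ bindCoalg H Fobj out f ≫
              H.pmap Y (coprod.desc h (𝟙 (Fobj Y))) := by
            rw [bindCoalg, coprod.inl_desc_assoc]; simp only [Category.assoc]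
    · -- inr component
      calc coprod.inr ≫ coprod.desc h (𝟙 (Fobj Y)) ≫ out Y
          = out Y := by rw [coprod.inr_desc_assoc, Category.id_comp]
        _ = out Y ≫ H.pmap Y (coprod.inr ≫ coprod.desc h (𝟙 (Fobj Y))) := by
            rw [coprod.inr_desc, H.pmap_id, Category.comp_id]
        _ = coprod.inr ≫ bindCoalg H Fobj out f ≫
              H.pmap Y (coprod.desc h (𝟙 (Fobj Y))) := by
            rw [H.pmap_comp]
            rw [bindCoalg, coprod.inr_desc_assoc]; simp only [Category.assoc]
  calc h = coprod.inl ≫ coprod.desc h (𝟙 (Fobj Y)) := by rw [coprod.inl_desc]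
    _ = coprod.inl ≫ k := by rw [key]
    _ = bindNu H Fobj out hfinal f := by rw [bindNu, hk]

theorem pmap_bind_w {X Y P Q : C} (p : P ⟶ Q) (g : X ⟶ H.obj Y P) {Z : C}
    (w : H.obj Y Q ⟶ Z) :
    H.bind P g ≫ H.pmap Y p ≫ w = H.pmap X p ≫ H.bind Q (g ≫ H.pmap Y p) ≫ w := by
  rw [← Category.assoc, H.pmap_bind, Category.assoc]

theorem bindNu_out_w {X Y : C} (f : X ⟶ Fobj Y) {Z : C}
    (w : H.obj Y (Fobj Y) ⟶ Z) :
    bindNu H Fobj out hfinal f ≫ out Y ≫ w =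
      out X ≫ H.pmap X (bindNu H Fobj out hfinal f) ≫
        H.bind (Fobj Y) (f ≫ out Y) ≫ w := by
  rw [← Category.assoc, bindNu_out]
  simp only [Category.assoc]

end Aux

theorem parametrized_monad_coalgebraic_resumption {C : Type u} [Category.{v} C]
    [HasBinaryCoproducts C] (H : PGMonad C)
    -- the final coalgebras `F# X = νγ. #(X,γ)`:
    (Fobj : C → C) (out : ∀ X : C, Fobj X ⟶ H.obj X (Fobj X))
    (hfinal : ∀ (X A : C) (c : A ⟶ H.obj X A),
      ∃! h : A ⟶ Fobj X, h ≫ out X = c ≫ H.pmap X h) :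
    -- `F#` carries a monad structure determined by finality:
    ∃ (ην : ∀ X : C, X ⟶ Fobj X)
      (bindν : ∀ (X Y : C), (X ⟶ Fobj Y) → (Fobj X ⟶ Fobj Y)),
      -- the monad laws:
      (∀ (X Y : C) (f : X ⟶ Fobj Y), ην X ≫ bindν X Y f = f) ∧
      (∀ X : C, bindν X X (ην X) = 𝟙 (Fobj X)) ∧
      (∀ (X Y Z : C) (f : X ⟶ Fobj Y) (g : Y ⟶ Fobj Z),
        bindν X Z (f ≫ bindν Y Z g) = bindν X Y f ≫ bindν Y Z g) ∧
      -- the coinductive characterization of the unit and of the Kleisli lifting: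
      (∀ X : C, ην X ≫ out X = H.η X (Fobj X)) ∧
      (∀ (X Y : C) (f : X ⟶ Fobj Y),
        bindν X Y f ≫ out Y =
          out X ≫ H.pmap X (bindν X Y f) ≫ H.bind (Fobj Y) (f ≫ out Y)) ∧
      -- `F#` is a guarded monad, where `f : X ⟶ F# Y` is `σ`-guarded iff `out ∘ f` is:
      -- (trv)
      (∀ (X Y Z V : C) (i₁ : Y ⟶ V) (i₂ : Z ⟶ V), IsCoprodCospan i₁ i₂ →
        ∀ f : X ⟶ Fobj Y,
          H.guarded (Fobj V) ((f ≫ bindν Y V (i₁ ≫ ην V)) ≫ out V) i₂ i₁) ∧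
      -- (par)
      (∀ (X Y V Z' Z'' Z : C) (j₁ : X ⟶ V) (j₂ : Y ⟶ V), IsCoprodCospan j₁ j₂ →
        ∀ (σ : Z' ⟶ Z) (σ' : Z'' ⟶ Z) (u : V ⟶ Fobj Z),
          H.guarded (Fobj Z) ((j₁ ≫ u) ≫ out Z) σ σ' →
          H.guarded (Fobj Z) ((j₂ ≫ u) ≫ out Z) σ σ' →
          H.guarded (Fobj Z) (u ≫ out Z) σ σ') ∧
      -- (cmp)
      (∀ (X Y Z V W' W'' W : C) (i₁ : Y ⟶ V) (i₂ : Z ⟶ V), IsCoprodCospan i₁ i₂ →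
        ∀ (σ : W' ⟶ W) (σ' : W'' ⟶ W) (f : X ⟶ Fobj V) (u : V ⟶ Fobj W),
          H.guarded (Fobj V) (f ≫ out V) i₂ i₁ →
          H.guarded (Fobj W) ((i₁ ≫ u) ≫ out W) σ σ' →
          H.guarded (Fobj W) ((f ≫ bindν V W u) ≫ out W) σ σ') ∧
      -- if each `#(-,P)` is guarded iterative, then so is `F#`:
      ((∀ (P X Y : C) (f : X ⟶ H.obj (Y ⨿ X) P),
          H.guarded P f (coprod.inr : X ⟶ Y ⨿ X) coprod.inl →
          ∃! s : X ⟶ H.obj Y P, s = f ≫ H.bind P (coprod.desc (H.η Y P) s)) →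
        ∀ (X Y : C) (f : X ⟶ Fobj (Y ⨿ X)),
          H.guarded (Fobj (Y ⨿ X)) (f ≫ out (Y ⨿ X))
            (coprod.inr : X ⟶ Y ⨿ X) coprod.inl →
          ∃! s : X ⟶ Fobj Y, s = f ≫ bindν (Y ⨿ X) Y (coprod.desc (ην Y) s)) := by
  refine ⟨fun X => etaNu H Fobj out hfinal X,
    fun X Y f => bindNu H Fobj out hfinal f, ?_, ?_, ?_, ?_, ?_, ?_, ?_, ?_, ?_⟩
  · -- left unit law
    intro X Y f
    apply out_cancel H Fobj out hfinal
    rw [Category.assoc, bindNu_out]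
    simp only [← Category.assoc, etaNu_out, H.pmap_η, H.η_bind]
  · -- right unit law
    intro X
    refine (bindNu_uniq H Fobj out hfinal _ ?_).symm
    simp [H.pmap_id, etaNu_out, H.bind_η]
  · -- associativity
    intro X Y Z f g
    refine (bindNu_uniq H Fobj out hfinal _ ?_).symm
    simp only [Category.assoc]
    rw [bindNu_out, bindNu_out_w H Fobj out hfinal f,
      pmap_bind_w H Fobj out hfinal, H.pmap_comp]
    simp only [← H.bind_comp, Category.assoc]
  · -- coinductive characterization of the unit
    intro X
    exact etaNu_out H Fobj out hfinal X
  · -- coinductive characterization of the Kleisli lifting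
    intro X Y f
    exact bindNu_out H Fobj out hfinal f
  · -- (trv)
    intro X Y Z V i₁ i₂ hcop f
    have h := H.trv (Fobj V) i₁ i₂ hcop
      (f ≫ out Y ≫ H.pmap Y (bindNu H Fobj out hfinal (i₁ ≫ etaNu H Fobj out hfinal V)))
    have e : (f ≫ bindNu H Fobj out hfinal (i₁ ≫ etaNu H Fobj out hfinal V)) ≫ out V =
        (f ≫ out Y ≫
            H.pmap Y (bindNu H Fobj out hfinal (i₁ ≫ etaNu H Fobj out hfinal V))) ≫
          H.bind (Fobj V) (i₁ ≫ H.η V (Fobj V)) := by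
      simp only [Category.assoc, bindNu_out, etaNu_out]
    rw [e]
    exact h
  · -- (par)
    intro X Y V Z' Z'' Z j₁ j₂ hcop σ σ' u h1 h2
    refine H.par (Fobj Z) j₁ j₂ hcop σ σ' (u ≫ out Z) ?_ ?_
    · rw [← Category.assoc]; exact h1
    · rw [← Category.assoc]; exact h2
  · -- (cmp)
    intro X Y Z V W' W'' W i₁ i₂ hcop σ σ' f u hf hu
    have hf' := H.pmap_guarded (bindNu H Fobj out hfinal u) (f ≫ out V) i₂ i₁ hf
    have hu' : H.guarded (Fobj W) (i₁ ≫ (u ≫ out W)) σ σ' := by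
      rw [← Category.assoc]; exact hu
    have h := H.cmp (Fobj W) i₁ i₂ hcop σ σ'
      ((f ≫ out V) ≫ H.pmap V (bindNu H Fobj out hfinal u)) (u ≫ out W) hf' hu'
    have e : (f ≫ bindNu H Fobj out hfinal u) ≫ out W =
        ((f ≫ out V) ≫ H.pmap V (bindNu H Fobj out hfinal u)) ≫
          H.bind (Fobj W) (u ≫ out W) := by
      simp only [Category.assoc, bindNu_out]
    rw [e]
    exact h
  · -- guarded iterativity
    intro hiter X Y f hg
    beta_reduce
    obtain ⟨s₀, hs₀, -⟩ := hiter (Fobj (Y ⨿ X)) X Y (f ≫ out (Y ⨿ X)) hg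
    set d : Fobj (Y ⨿ X) ⟶ H.obj Y (Fobj (Y ⨿ X)) :=
      out (Y ⨿ X) ≫ H.bind (Fobj (Y ⨿ X)) (coprod.desc (H.η Y (Fobj (Y ⨿ X))) s₀)
      with hd0
    obtain ⟨h, hh, hhu⟩ := hfinal Y (Fobj (Y ⨿ X)) d
    -- for any h', s₀ ≫ pmap h' is a solution of (f ≫ out) ≫ pmap h'
    have sol : ∀ h' : Fobj (Y ⨿ X) ⟶ Fobj Y,
        s₀ ≫ H.pmap Y h' =
          ((f ≫ out (Y ⨿ X)) ≫ H.pmap (Y ⨿ X) h') ≫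
            H.bind (Fobj Y) (coprod.desc (H.η Y (Fobj Y)) (s₀ ≫ H.pmap Y h')) := by
      intro h'
      conv_lhs => rw [hs₀]
      rw [Category.assoc, H.pmap_bind, coprod.desc_comp, H.pmap_η]
      simp only [Category.assoc]
    have hd : ∀ h' : Fobj (Y ⨿ X) ⟶ Fobj Y,
        d ≫ H.pmap Y h' =
          out (Y ⨿ X) ≫ H.pmap (Y ⨿ X) h' ≫
            H.bind (Fobj Y) (coprod.desc (H.η Y (Fobj Y)) (s₀ ≫ H.pmap Y h')) := by
      intro h'
      rw [hd0, Category.assoc, H.pmap_bind, coprod.desc_comp, H.pmap_η]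
    have hs_out : (f ≫ h) ≫ out Y = s₀ ≫ H.pmap Y h := by
      rw [Category.assoc, hh, hd h]
      conv_rhs => rw [sol h]
      simp only [Category.assoc]
    have hb : h = bindNu H Fobj out hfinal
        (coprod.desc (etaNu H Fobj out hfinal Y) (f ≫ h)) := by
      apply bindNu_uniq H Fobj out hfinal
      rw [hh, hd h, coprod.desc_comp, etaNu_out, hs_out]
    refine ⟨f ≫ h, ?_, ?_⟩
    · beta_reduce
      rw [← hb]
    · intro s' hs'
      set h' := bindNu H Fobj out hfinal
        (coprod.desc (etaNu H Fobj out hfinal Y) s') with hh'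
      have guard' : H.guarded (Fobj Y)
          ((f ≫ out (Y ⨿ X)) ≫ H.pmap (Y ⨿ X) h')
          (coprod.inr : X ⟶ Y ⨿ X) coprod.inl :=
        H.pmap_guarded h' (f ≫ out (Y ⨿ X)) _ _ hg
      have hsol' : s' ≫ out Y =
          ((f ≫ out (Y ⨿ X)) ≫ H.pmap (Y ⨿ X) h') ≫
            H.bind (Fobj Y) (coprod.desc (H.η Y (Fobj Y)) (s' ≫ out Y)) := by
        conv_lhs => rw [hs', Category.assoc, hh', bindNu_out]
        rw [← hh', coprod.desc_comp, etaNu_out]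
        simp only [Category.assoc]
      obtain ⟨q, -, huq⟩ := hiter (Fobj Y) X Y
        ((f ≫ out (Y ⨿ X)) ≫ H.pmap (Y ⨿ X) h') guard'
      have e1 : s' ≫ out Y = q := huq _ hsol'
      have e2 : s₀ ≫ H.pmap Y h' = q := huq _ (sol h')
      have e3 : s' ≫ out Y = s₀ ≫ H.pmap Y h' := e1.trans e2.symm
      have hh'coalg : h' ≫ out Y = d ≫ H.pmap Y h' := by
        rw [hh', bindNu_out, coprod.desc_comp, etaNu_out, ← hh', e3, hd h']

      have : h' = h := hhu h' hh'coalg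
      rw [hs', this]
end

section
/- Let S be a monad on a category C with finite coproducts such that all the requisite final coalgebras S^ν X = νγ.S(X+γ) (and their iterates) exist. Define bold-η : S → S^ν by bold-η_X = out⁻¹ ∘ S(inl), ρ^ν = coit(ρ∘out) for a natural transformation ρ : S^ν → S, bold-μ_X = coit(S[id, inr∘out⁻¹] ∘ out ∘ out) : S^{νν}X → S^ν X, and the delay map ▷ = out⁻¹ ∘ η ∘ inr : S^ν → S^ν. If ρ : S^ν → S is a monad morphism satisfying ρ∘bold-η = id, ρ∘bold-μ = ρ∘ρ^ν, and the delay cancellation condition ρ∘▷ = ρ, then S, totally guarded and equipped with the iteration operator f† = ρ ∘ coit(f) (where coit(f) : X → S^ν Y is the unique coalgebra morphism from (X, f) to (S^ν Y, out)), is a complete Elgot monad. -/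
/-!
Statement 16: Let `S` be a monad on `C` (with finite coproducts) such that the final
coalgebras `S^ν X = νγ. S(X+γ)` and their iterates exist. With
`boldη = out⁻¹ ∘ S(inl) : S ⟶ S^ν`, `ρ^ν = coit(ρ ∘ out)`,
`boldμ = coit(S[id, inr ∘ out⁻¹] ∘ out ∘ out) : S^{νν} ⟶ S^ν` and the delay map
`▷ = out⁻¹ ∘ η ∘ inr : S^ν ⟶ S^ν`: if `ρ : S^ν ⟶ S` is a monad morphism with
`ρ ∘ boldη = id`, `ρ ∘ boldμ = ρ ∘ ρ^ν` and `ρ ∘ ▷ = ρ`, then `S`, totally guarded and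
equipped with the iteration operator `f† = ρ ∘ coit(f)`, is a complete Elgot monad
(it satisfies the fixpoint identity, naturality, codiagonal and uniformity).
-/

open CategoryTheory CategoryTheory.Limits

universe v u

set_option maxHeartbeats 1000000 in
theorem nu_algebra_with_delay_cancellation_is_Elgot {C : Type u} [Category.{v} C]
    [HasBinaryCoproducts C] (S : KMonad C)
    -- the final coalgebras `S^ν X = νγ. S(X + γ)`, with structure maps `out`
    -- (isomorphisms, with inverse `tuo`) and coiteration `coit`:
    (Sν : C → C) (out : ∀ X : C, Sν X ⟶ S.obj (X ⨿ Sν X))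
    (tuo : ∀ X : C, S.obj (X ⨿ Sν X) ⟶ Sν X)
    (hot : ∀ X : C, out X ≫ tuo X = 𝟙 (Sν X))
    (hto : ∀ X : C, tuo X ≫ out X = 𝟙 (S.obj (X ⨿ Sν X)))
    (coit : ∀ (X A : C), (A ⟶ S.obj (X ⨿ A)) → (A ⟶ Sν X))
    (hcoit : ∀ (X A : C) (c : A ⟶ S.obj (X ⨿ A)),
      coit X A c ≫ out X = c ≫ S.bind (coprod.map (𝟙 X) (coit X A c) ≫ S.η (X ⨿ Sν X)))
    (hcoit_unique : ∀ (X A : C) (c : A ⟶ S.obj (X ⨿ A)) (h : A ⟶ Sν X),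
      h ≫ out X = c ≫ S.bind (coprod.map (𝟙 X) h ≫ S.η (X ⨿ Sν X)) → h = coit X A c)
    -- the Kleisli lifting of the monad `S^ν`, coinductively characterized:
    (bindν : ∀ (X Y : C), (X ⟶ Sν Y) → (Sν X ⟶ Sν Y))
    (hbindν : ∀ (X Y : C) (f : X ⟶ Sν Y),
      bindν X Y f ≫ out Y =
        out X ≫ S.bind (coprod.desc (f ≫ out Y)
          (bindν X Y f ≫ coprod.inr ≫ S.η (Y ⨿ Sν Y))))
    -- the second iterate `S^{νν} X = νγ. S^ν(X + γ)`, with invertible structure maps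
    -- and finality (w.r.t. the functorial action of `S^ν` given by coiteration):
    (Sνν : C → C) (Out : ∀ X : C, Sνν X ⟶ Sν (X ⨿ Sνν X))
    (Tuo : ∀ X : C, Sν (X ⨿ Sνν X) ⟶ Sνν X)
    (hOT : ∀ X : C, Out X ≫ Tuo X = 𝟙 (Sνν X))
    (hTO : ∀ X : C, Tuo X ≫ Out X = 𝟙 (Sν (X ⨿ Sνν X)))
    (hOutFinal : ∀ (X A : C) (c : A ⟶ Sν (X ⨿ A)),
      ∃! h : A ⟶ Sνν X,
        h ≫ Out X = c ≫ bindν (X ⨿ A) (X ⨿ Sνν X)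
          (coprod.map (𝟙 X) h ≫ coprod.inl ≫
            S.η ((X ⨿ Sνν X) ⨿ Sν (X ⨿ Sνν X)) ≫ tuo (X ⨿ Sνν X)))
    -- `ρ : S^ν ⟶ S` is a monad morphism (w.r.t. the unit `out⁻¹ ∘ η ∘ inl` of `S^ν`):
    (ρ : ∀ X : C, Sν X ⟶ S.obj X)
    (hρη : ∀ X : C, (coprod.inl ≫ S.η (X ⨿ Sν X) ≫ tuo X) ≫ ρ X = S.η X)
    (hρbind : ∀ (X Y : C) (f : X ⟶ Sν Y),
      bindν X Y f ≫ ρ Y = ρ X ≫ S.bind (f ≫ ρ Y))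
    -- `ρ ∘ boldη = id`, where `boldη = out⁻¹ ∘ S(inl) : S ⟶ S^ν`:
    (halg₁ : ∀ X : C,
      (S.bind (coprod.inl ≫ S.η (X ⨿ Sν X)) ≫ tuo X) ≫ ρ X = 𝟙 (S.obj X))
    -- `ρ ∘ boldμ = ρ ∘ ρ^ν`, where `boldμ = coit(S[id, inr ∘ Out⁻¹] ∘ out ∘ out)`
    -- and `ρ^ν = coit(ρ ∘ Out)`:
    (halg₂ : ∀ X : C,
      coit X (Sνν X)
          (Out X ≫ out (X ⨿ Sνν X) ≫
            S.bind ((coprod.desc (𝟙 (X ⨿ Sνν X)) (Tuo X ≫ coprod.inr)) ≫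
              S.η (X ⨿ Sνν X))) ≫ ρ X =
        coit X (Sνν X) (Out X ≫ ρ (X ⨿ Sνν X)) ≫ ρ X)
    -- delay cancellation `ρ ∘ ▷ = ρ`, where `▷ = out⁻¹ ∘ η ∘ inr`:
    (hdelay : ∀ X : C, (coprod.inr ≫ S.η (X ⨿ Sν X) ≫ tuo X) ≫ ρ X = ρ X) :
    -- then `S`, totally guarded with iteration `f† = ρ ∘ coit f`, is a complete
    -- Elgot monad:
    -- fixpoint identity:
    (∀ (X Y : C) (f : X ⟶ S.obj (Y ⨿ X)),
      coit Y X f ≫ ρ Y = f ≫ S.bind (coprod.desc (S.η Y) (coit Y X f ≫ ρ Y))) ∧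
    -- naturality:
    (∀ (X Y Z : C) (f : X ⟶ S.obj (Y ⨿ X)) (g : Y ⟶ S.obj Z),
      (coit Y X f ≫ ρ Y) ≫ S.bind g =
        coit Z X (f ≫ S.bind (coprod.desc (g ≫ S.bind (coprod.inl ≫ S.η (Z ⨿ X)))
          (coprod.inr ≫ S.η (Z ⨿ X)))) ≫ ρ Z) ∧
    -- codiagonal:
    (∀ (X Y : C) (f : X ⟶ S.obj ((Y ⨿ X) ⨿ X)),
      coit Y X (f ≫ S.bind (coprod.desc (𝟙 (Y ⨿ X)) coprod.inr ≫ S.η (Y ⨿ X))) ≫ ρ Y =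
        coit Y X (coit (Y ⨿ X) X f ≫ ρ (Y ⨿ X)) ≫ ρ Y) ∧
    -- uniformity:
    (∀ (X Y Z : C) (f : X ⟶ S.obj (Y ⨿ X)) (g : Z ⟶ S.obj (Y ⨿ Z)) (h : Z ⟶ X),
      h ≫ f = g ≫ S.bind (coprod.map (𝟙 Y) h ≫ S.η (Y ⨿ X)) →
      h ≫ coit Y X f ≫ ρ Y = coit Y Z g ≫ ρ Y) := by

  -- bind fusion, in plain and reassociated form
  have bb : ∀ {X Y Z : C} (f : X ⟶ S.obj Y) (g : Y ⟶ S.obj Z),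
      S.bind f ≫ S.bind g = S.bind (f ≫ S.bind g) := fun f g => (S.bind_comp f g).symm
  have bb' : ∀ {X Y Z W : C} (f : X ⟶ S.obj Y) (g : Y ⟶ S.obj Z) (k : S.obj Z ⟶ W),
      S.bind f ≫ S.bind g ≫ k = S.bind (f ≫ S.bind g) ≫ k := by
    intro _ _ _ _ f g k; rw [← Category.assoc, bb]
  have ηb' : ∀ {X Y W : C} (f : X ⟶ S.obj Y) (k : S.obj Y ⟶ W),
      S.η X ≫ S.bind f ≫ k = f ≫ k := by
    intro _ _ _ f k; rw [← Category.assoc, S.η_bind]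
  have hto' : ∀ (X : C) {W : C} (k : S.obj (X ⨿ Sν X) ⟶ W), tuo X ≫ out X ≫ k = k := by
    intro X W k; rw [← Category.assoc, hto, Category.id_comp]
  have hot' : ∀ (X : C) {W : C} (k : Sν X ⟶ W), out X ≫ tuo X ≫ k = k := by
    intro X W k; rw [← Category.assoc, hot, Category.id_comp]
  have mm : ∀ {Y A B D : C} (a : A ⟶ B) (b : B ⟶ D),
      coprod.map (𝟙 Y) a ≫ coprod.map (𝟙 Y) b = coprod.map (𝟙 Y) (a ≫ b) := by
    intros; apply coprod.hom_ext <;> simp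
  have mm' : ∀ {Y A B D W : C} (a : A ⟶ B) (b : B ⟶ D) (k : Y ⨿ D ⟶ W),
      coprod.map (𝟙 Y) a ≫ coprod.map (𝟙 Y) b ≫ k = coprod.map (𝟙 Y) (a ≫ b) ≫ k := by
    intros; rw [← Category.assoc, mm]
  have ilm : ∀ {A B A' B' W : C} (a : A ⟶ A') (b : B ⟶ B') (k : A' ⨿ B' ⟶ W),
      coprod.inl ≫ coprod.map a b ≫ k = a ≫ coprod.inl ≫ k := by
    intros; rw [← Category.assoc, coprod.inl_map, Category.assoc]
  have irm : ∀ {A B A' B' W : C} (a : A ⟶ A') (b : B ⟶ B') (k : A' ⨿ B' ⟶ W),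
      coprod.inr ≫ coprod.map a b ≫ k = b ≫ coprod.inr ≫ k := by
    intros; rw [← Category.assoc, coprod.inr_map, Category.assoc]
  have hOT' : ∀ (X : C) {W : C} (k : Sνν X ⟶ W), Out X ≫ Tuo X ≫ k = k := by
    intro X W k; rw [← Category.assoc, hOT, Category.id_comp]
  -- the crucial algebra identity : ρ ∘ out⁻¹ = S.bind [η, ρ]
  have hρtuo : ∀ X : C, tuo X ≫ ρ X = S.bind (coprod.desc (S.η X) (ρ X)) := by
    intro X
    have hu : S.η (X ⨿ Sν X) ≫ tuo X ≫ ρ X = coprod.desc (S.η X) (ρ X) := by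
      apply coprod.hom_ext
      · rw [coprod.inl_desc]; simpa using hρη X
      · rw [coprod.inr_desc]; simpa using hdelay X
    have hmout :
        (S.bind (coprod.inl ≫ S.η ((X ⨿ Sν X) ⨿ Sν (X ⨿ Sν X))) ≫ tuo (X ⨿ Sν X) ≫
          bindν (X ⨿ Sν X) X (S.η (X ⨿ Sν X) ≫ tuo X)) ≫ out X = 𝟙 (S.obj (X ⨿ Sν X)) := by
      have h1 := hbindν (X ⨿ Sν X) X (S.η (X ⨿ Sν X) ≫ tuo X)
      simp only [Category.assoc]
      rw [h1]
      simp only [Category.assoc, hto, hto', Category.comp_id, bb', bb, S.η_bind, ηb',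
        coprod.inl_desc, S.bind_η]
    have hm : S.bind (coprod.inl ≫ S.η ((X ⨿ Sν X) ⨿ Sν (X ⨿ Sν X))) ≫ tuo (X ⨿ Sν X) ≫
          bindν (X ⨿ Sν X) X (S.η (X ⨿ Sν X) ≫ tuo X) = tuo X := by
      have := congrArg (fun t => t ≫ tuo X) hmout
      simpa only [Category.assoc, hot, hot', Category.comp_id, Category.id_comp] using this
    calc tuo X ≫ ρ X
        = (S.bind (coprod.inl ≫ S.η ((X ⨿ Sν X) ⨿ Sν (X ⨿ Sν X))) ≫ tuo (X ⨿ Sν X) ≫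
            bindν (X ⨿ Sν X) X (S.η (X ⨿ Sν X) ≫ tuo X)) ≫ ρ X := by rw [hm]
      _ = S.bind (coprod.inl ≫ S.η ((X ⨿ Sν X) ⨿ Sν (X ⨿ Sν X))) ≫ tuo (X ⨿ Sν X) ≫
            ρ (X ⨿ Sν X) ≫ S.bind (S.η (X ⨿ Sν X) ≫ tuo X ≫ ρ X) := by
          simp only [Category.assoc, hρbind]
      _ = S.bind (coprod.desc (S.η X) (ρ X)) := by
          rw [hu, reassoc_of% (halg₁ (X ⨿ Sν X))]
  have hρout : ∀ X : C, ρ X = out X ≫ S.bind (coprod.desc (S.η X) (ρ X)) := by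
    intro X; rw [← hρtuo, hot']
  -- ============ fixpoint ============
  have fix : ∀ (X Y : C) (f : X ⟶ S.obj (Y ⨿ X)),
      coit Y X f ≫ ρ Y = f ≫ S.bind (coprod.desc (S.η Y) (coit Y X f ≫ ρ Y)) := by
    intro X Y f
    calc coit Y X f ≫ ρ Y
        = coit Y X f ≫ out Y ≫ S.bind (coprod.desc (S.η Y) (ρ Y)) := by
          rw [← hρout]
      _ = f ≫ S.bind (coprod.map (𝟙 Y) (coit Y X f) ≫ S.η (Y ⨿ Sν Y)) ≫
            S.bind (coprod.desc (S.η Y) (ρ Y)) := by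
          rw [reassoc_of% (hcoit Y X f)]
      _ = f ≫ S.bind (coprod.desc (S.η Y) (coit Y X f ≫ ρ Y)) := by
          simp only [bb, Category.assoc, S.η_bind, ηb', coprod.map_desc, coprod.inl_desc,
            coprod.inr_desc, Category.id_comp]
  -- ============ uniformity ============
  have unif : ∀ (X Y Z : C) (f : X ⟶ S.obj (Y ⨿ X)) (g : Z ⟶ S.obj (Y ⨿ Z)) (h : Z ⟶ X),
      h ≫ f = g ≫ S.bind (coprod.map (𝟙 Y) h ≫ S.η (Y ⨿ X)) →
      h ≫ coit Y X f ≫ ρ Y = coit Y Z g ≫ ρ Y := by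
    intro X Y Z f g h hyp
    have : h ≫ coit Y X f = coit Y Z g := by
      apply hcoit_unique
      calc (h ≫ coit Y X f) ≫ out Y
          = h ≫ f ≫ S.bind (coprod.map (𝟙 Y) (coit Y X f) ≫ S.η (Y ⨿ Sν Y)) := by
            rw [Category.assoc, hcoit]
        _ = g ≫ S.bind (coprod.map (𝟙 Y) h ≫ S.η (Y ⨿ X)) ≫
              S.bind (coprod.map (𝟙 Y) (coit Y X f) ≫ S.η (Y ⨿ Sν Y)) := by
            rw [reassoc_of% hyp]
        _ = g ≫ S.bind (coprod.map (𝟙 Y) (h ≫ coit Y X f) ≫ S.η (Y ⨿ Sν Y)) := by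
            simp only [bb, Category.assoc, S.η_bind, ηb', coprod.map_desc, coprod.inl_desc,
              coprod.inr_desc, Category.id_comp, coprod.map_map, mm, mm', Category.comp_id]
    rw [← this, Category.assoc]
  -- ============ naturality ============
  have nat : ∀ (X Y Z : C) (f : X ⟶ S.obj (Y ⨿ X)) (g : Y ⟶ S.obj Z),
      (coit Y X f ≫ ρ Y) ≫ S.bind g =
        coit Z X (f ≫ S.bind (coprod.desc (g ≫ S.bind (coprod.inl ≫ S.η (Z ⨿ X)))
          (coprod.inr ≫ S.η (Z ⨿ X)))) ≫ ρ Z := by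
    intro X Y Z f g
    set w : Y ⟶ Sν Z := g ≫ S.bind (coprod.inl ≫ S.η (Z ⨿ Sν Z)) ≫ tuo Z with hw
    have hkey : coit Y X f ≫ bindν Y Z w =
        coit Z X (f ≫ S.bind (coprod.desc (g ≫ S.bind (coprod.inl ≫ S.η (Z ⨿ X)))
          (coprod.inr ≫ S.η (Z ⨿ X)))) := by
      apply hcoit_unique
      have hwo : w ≫ out Z = g ≫ S.bind (coprod.inl ≫ S.η (Z ⨿ Sν Z)) := by
        rw [hw]; simp only [Category.assoc, hto, hto', Category.comp_id]
      calc (coit Y X f ≫ bindν Y Z w) ≫ out Z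
          = coit Y X f ≫ out Y ≫ S.bind (coprod.desc (w ≫ out Z)
              (bindν Y Z w ≫ coprod.inr ≫ S.η (Z ⨿ Sν Z))) := by
            rw [Category.assoc, hbindν]
        _ = f ≫ S.bind (coprod.map (𝟙 Y) (coit Y X f) ≫ S.η (Y ⨿ Sν Y)) ≫
              S.bind (coprod.desc (w ≫ out Z)
              (bindν Y Z w ≫ coprod.inr ≫ S.η (Z ⨿ Sν Z))) := by
            rw [reassoc_of% (hcoit Y X f)]
        _ = (f ≫ S.bind (coprod.desc (g ≫ S.bind (coprod.inl ≫ S.η (Z ⨿ X)))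
              (coprod.inr ≫ S.η (Z ⨿ X)))) ≫
              S.bind (coprod.map (𝟙 Z) (coit Y X f ≫ bindν Y Z w) ≫ S.η (Z ⨿ Sν Z)) := by
            rw [hwo]
            simp only [bb, bb', Category.assoc, S.η_bind, ηb', coprod.map_desc,
              coprod.desc_comp, coprod.inl_desc, coprod.inr_desc, Category.id_comp,
              Category.comp_id, coprod.inl_map, coprod.inr_map, ilm, irm]
    have hwρ : w ≫ ρ Z = g := by
      have h6 := halg₁ Z
      simp only [Category.assoc] at h6 ⊢
      rw [hw]
      simp only [Category.assoc, h6, Category.comp_id]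
    rw [← hkey]
    simp only [Category.assoc, hρbind, hwρ]
  -- ============ codiagonal ============
  have codiag : ∀ (X Y : C) (f : X ⟶ S.obj ((Y ⨿ X) ⨿ X)),
      coit Y X (f ≫ S.bind (coprod.desc (𝟙 (Y ⨿ X)) coprod.inr ≫ S.η (Y ⨿ X))) ≫ ρ Y =
        coit Y X (coit (Y ⨿ X) X f ≫ ρ (Y ⨿ X)) ≫ ρ Y := by
    intro X Y f
    set c : X ⟶ Sν (Y ⨿ X) := coit (Y ⨿ X) X f with hc
    obtain ⟨h, hh, -⟩ := hOutFinal Y X c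
    set w : Y ⨿ X ⟶ Sν (Y ⨿ Sνν Y) :=
      coprod.map (𝟙 Y) h ≫ coprod.inl ≫
        S.η ((Y ⨿ Sνν Y) ⨿ Sν (Y ⨿ Sνν Y)) ≫ tuo (Y ⨿ Sνν Y) with hwdef
    set ρν : Sνν Y ⟶ Sν Y := coit Y (Sνν Y) (Out Y ≫ ρ (Y ⨿ Sνν Y)) with hρν
    set bμ : Sνν Y ⟶ Sν Y := coit Y (Sνν Y)
      (Out Y ≫ out (Y ⨿ Sνν Y) ≫
        S.bind ((coprod.desc (𝟙 (Y ⨿ Sνν Y)) (Tuo Y ≫ coprod.inr)) ≫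
          S.η (Y ⨿ Sνν Y))) with hbμ
    have hwρ : w ≫ ρ (Y ⨿ Sνν Y) = coprod.map (𝟙 Y) h ≫ S.η (Y ⨿ Sνν Y) := by
      have h5 := hρη (Y ⨿ Sνν Y)
      simp only [Category.assoc] at h5 ⊢
      rw [hwdef]
      simp only [Category.assoc, h5]
    have hwo : w ≫ out (Y ⨿ Sνν Y) =
        coprod.map (𝟙 Y) h ≫ coprod.inl ≫ S.η ((Y ⨿ Sνν Y) ⨿ Sν (Y ⨿ Sνν Y)) := by
      rw [hwdef]; simp only [Category.assoc, hto, hto', Category.comp_id]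
    -- h ≫ ρν = coit (c ≫ ρ)
    have hb : h ≫ ρν = coit Y X (c ≫ ρ (Y ⨿ X)) := by
      apply hcoit_unique
      calc (h ≫ ρν) ≫ out Y
          = h ≫ Out Y ≫ ρ (Y ⨿ Sνν Y) ≫
              S.bind (coprod.map (𝟙 Y) ρν ≫ S.η (Y ⨿ Sν Y)) := by
            rw [Category.assoc, hρν, hcoit, ← hρν]; simp only [Category.assoc]
        _ = c ≫ bindν (Y ⨿ X) (Y ⨿ Sνν Y) w ≫ ρ (Y ⨿ Sνν Y) ≫
              S.bind (coprod.map (𝟙 Y) ρν ≫ S.η (Y ⨿ Sν Y)) := by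
            rw [reassoc_of% hh]
        _ = c ≫ ρ (Y ⨿ X) ≫ S.bind (w ≫ ρ (Y ⨿ Sνν Y)) ≫
              S.bind (coprod.map (𝟙 Y) ρν ≫ S.η (Y ⨿ Sν Y)) := by
            rw [reassoc_of% (hρbind (Y ⨿ X) (Y ⨿ Sνν Y) w)]
        _ = (c ≫ ρ (Y ⨿ X)) ≫ S.bind (coprod.map (𝟙 Y) (h ≫ ρν) ≫ S.η (Y ⨿ Sν Y)) := by
            rw [hwρ]
            simp only [bb, bb', Category.assoc, S.η_bind, ηb', coprod.map_desc,
              coprod.inl_desc, coprod.inr_desc, Category.id_comp, Category.comp_id,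
              coprod.map_map, mm, mm', ilm, irm]
    -- h ≫ bμ = coit (S[id,inr] ∘ f)
    have ha : h ≫ bμ =
        coit Y X (f ≫ S.bind (coprod.desc (𝟙 (Y ⨿ X)) coprod.inr ≫ S.η (Y ⨿ X))) := by
      apply hcoit_unique
      calc (h ≫ bμ) ≫ out Y
          = h ≫ Out Y ≫ out (Y ⨿ Sνν Y) ≫
              S.bind ((coprod.desc (𝟙 (Y ⨿ Sνν Y)) (Tuo Y ≫ coprod.inr)) ≫
                S.η (Y ⨿ Sνν Y)) ≫
              S.bind (coprod.map (𝟙 Y) bμ ≫ S.η (Y ⨿ Sν Y)) := by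
            rw [Category.assoc, hbμ, hcoit, ← hbμ]; simp only [Category.assoc]
        _ = c ≫ bindν (Y ⨿ X) (Y ⨿ Sνν Y) w ≫ out (Y ⨿ Sνν Y) ≫
              S.bind ((coprod.desc (𝟙 (Y ⨿ Sνν Y)) (Tuo Y ≫ coprod.inr)) ≫
                S.η (Y ⨿ Sνν Y)) ≫
              S.bind (coprod.map (𝟙 Y) bμ ≫ S.η (Y ⨿ Sν Y)) := by
            rw [reassoc_of% hh]
        _ = c ≫ out (Y ⨿ X) ≫
              S.bind (coprod.desc (w ≫ out (Y ⨿ Sνν Y))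
                (bindν (Y ⨿ X) (Y ⨿ Sνν Y) w ≫ coprod.inr ≫
                  S.η ((Y ⨿ Sνν Y) ⨿ Sν (Y ⨿ Sνν Y)))) ≫
              S.bind ((coprod.desc (𝟙 (Y ⨿ Sνν Y)) (Tuo Y ≫ coprod.inr)) ≫
                S.η (Y ⨿ Sνν Y)) ≫
              S.bind (coprod.map (𝟙 Y) bμ ≫ S.η (Y ⨿ Sν Y)) := by
            rw [reassoc_of% (hbindν (Y ⨿ X) (Y ⨿ Sνν Y) w)]
        _ = f ≫ S.bind (coprod.map (𝟙 (Y ⨿ X)) c ≫ S.η ((Y ⨿ X) ⨿ Sν (Y ⨿ X))) ≫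
              S.bind (coprod.desc (w ≫ out (Y ⨿ Sνν Y))
                (bindν (Y ⨿ X) (Y ⨿ Sνν Y) w ≫ coprod.inr ≫
                  S.η ((Y ⨿ Sνν Y) ⨿ Sν (Y ⨿ Sνν Y)))) ≫
              S.bind ((coprod.desc (𝟙 (Y ⨿ Sνν Y)) (Tuo Y ≫ coprod.inr)) ≫
                S.η (Y ⨿ Sνν Y)) ≫
              S.bind (coprod.map (𝟙 Y) bμ ≫ S.η (Y ⨿ Sν Y)) := by
            rw [hc, reassoc_of% (hcoit (Y ⨿ X) X f)]
        _ = (f ≫ S.bind (coprod.desc (𝟙 (Y ⨿ X)) coprod.inr ≫ S.η (Y ⨿ X))) ≫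
              S.bind (coprod.map (𝟙 Y) (h ≫ bμ) ≫ S.η (Y ⨿ Sν Y)) := by
            rw [hwo]
            have hcb : c ≫ bindν (Y ⨿ X) (Y ⨿ Sνν Y) w = h ≫ Out Y := hh.symm
            simp only [bb, bb', Category.assoc, S.η_bind, ηb', coprod.map_desc,
              coprod.desc_comp, coprod.inl_desc, coprod.inr_desc, Category.id_comp,
              Category.comp_id, coprod.inl_map, coprod.inr_map, ilm, irm, coprod.map_map, mm, mm', ilm, irm]
            rw [reassoc_of% hcb]
            simp only [hOT', Category.assoc]
    calc coit Y X (f ≫ S.bind (coprod.desc (𝟙 (Y ⨿ X)) coprod.inr ≫ S.η (Y ⨿ X))) ≫ ρ Y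
        = h ≫ bμ ≫ ρ Y := by rw [← Category.assoc, ha]
      _ = h ≫ ρν ≫ ρ Y := by rw [hbμ, hρν, halg₂ Y]
      _ = coit Y X (c ≫ ρ (Y ⨿ X)) ≫ ρ Y := by rw [← Category.assoc, hb]
  exact ⟨fix, nat, codiag, unif⟩
end

section
/- Let X and Y be sets and let f : X → Option ((Y ⊕ X) × ℕ) be guarded in the sense that whenever f x = some (Sum.inr x', k) then k > 0. Then there exists a unique function g : X → Option (Y × ℕ) satisfying, for all x ∈ X: if f x = none then g x = none; if f x = some (Sum.inl y, k) then g x = some (y, k); and if f x = some (Sum.inr x', k) then g x = Option.map (fun (y, t) => (y, t + k)) (g x'). -/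
/-!
Statement 19: Let `f : X → Option ((Y ⊕ X) × ℕ)` be guarded: whenever
`f x = some (Sum.inr x', k)` then `k > 0`. Then there is a unique
`g : X → Option (Y × ℕ)` such that for all `x`:
if `f x = none` then `g x = none`; if `f x = some (Sum.inl y, k)` then
`g x = some (y, k)`; and if `f x = some (Sum.inr x', k)` then
`g x = Option.map (fun (y, t) => (y, t + k)) (g x')`.
-/

/-- Fuel-bounded evaluation. -/
def gsRun {X Y : Type*} (f : X → Option ((Y ⊕ X) × ℕ)) : ℕ → X → Option (Y × ℕ)
  | 0, _ => none
  | n+1, x =>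
    match f x with
    | none => none
    | some (Sum.inl y, k) => some (y, k)
    | some (Sum.inr x', k) => Option.map (fun p : Y × ℕ => (p.1, p.2 + k)) (gsRun f n x')

theorem gsRun_unique {X Y : Type*} (f : X → Option ((Y ⊕ X) × ℕ)) :
    ∀ (n m : ℕ) (x : X) (v w : Y × ℕ),
      gsRun f n x = some v → gsRun f m x = some w → v = w := by
  intro n
  induction n with
  | zero => intro m x v w h; simp [gsRun] at h
  | succ n ih =>
    intro m x v w hv hw
    cases m with
    | zero => simp [gsRun] at hw
    | succ m =>
      simp only [gsRun] at hv hw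
      cases hfx : f x with
      | none => rw [hfx] at hv; simp at hv
      | some p =>
        obtain ⟨s, k⟩ := p
        cases s with
        | inl y =>
          rw [hfx] at hv hw; simp at hv hw; rw [← hv, ← hw]
        | inr x' =>
          rw [hfx] at hv hw
          simp only [Option.map_eq_some_iff] at hv hw
          obtain ⟨a, ha, hav⟩ := hv
          obtain ⟨b, hb, hbw⟩ := hw
          have := ih m x' a b ha hb
          subst this
          rw [← hav, ← hbw]

theorem guarded_step_counting_unique_solution (X Y : Type*)
    (f : X → Option ((Y ⊕ X) × ℕ))
    (hf : ∀ (x : X) (x' : X) (k : ℕ), f x = some (Sum.inr x', k) → k > 0) :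
    ∃! g : X → Option (Y × ℕ), ∀ x : X,
      (f x = none → g x = none) ∧
      (∀ (y : Y) (k : ℕ), f x = some (Sum.inl y, k) → g x = some (y, k)) ∧
      (∀ (x' : X) (k : ℕ), f x = some (Sum.inr x', k) →
        g x = Option.map (fun p : Y × ℕ => (p.1, p.2 + k)) (g x')) := by
  classical
  set g : X → Option (Y × ℕ) := fun x =>
    if h : ∃ v : Y × ℕ, ∃ n, gsRun f n x = some v then some h.choose else none with hg
  have hg_some : ∀ (x : X) (v : Y × ℕ) (n : ℕ), gsRun f n x = some v → g x = some v := by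
    intro x v n hn
    have hex : ∃ v : Y × ℕ, ∃ n, gsRun f n x = some v := ⟨v, n, hn⟩
    have hspec := hex.choose_spec
    obtain ⟨m, hm⟩ := hspec
    have : hex.choose = v := gsRun_unique f m n x _ v hm hn
    simp only [hg]
    rw [dif_pos hex, this]
  have hg_none : ∀ x : X, (∀ (v : Y × ℕ) (n : ℕ), gsRun f n x ≠ some v) → g x = none := by
    intro x hx
    have : ¬ ∃ v : Y × ℕ, ∃ n, gsRun f n x = some v := by
      rintro ⟨v, n, hn⟩; exact hx v n hn
    simp only [hg]
    rw [dif_neg this]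
  -- g satisfies the specification
  have hsat : ∀ x : X,
      (f x = none → g x = none) ∧
      (∀ (y : Y) (k : ℕ), f x = some (Sum.inl y, k) → g x = some (y, k)) ∧
      (∀ (x' : X) (k : ℕ), f x = some (Sum.inr x', k) →
        g x = Option.map (fun p : Y × ℕ => (p.1, p.2 + k)) (g x')) := by
    intro x
    refine ⟨?_, ?_, ?_⟩
    · intro hfx
      apply hg_none
      intro v n hn
      cases n with
      | zero => simp [gsRun] at hn
      | succ n => simp [gsRun, hfx] at hn
    · intro y k hfx
      apply hg_some x (y, k) 1
      simp [gsRun, hfx]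
    · intro x' k hfx
      cases hgx' : g x' with
      | none =>
        -- then no n gives some for x', hence none for x
        have hnone : ∀ (v : Y × ℕ) (n : ℕ), gsRun f n x' ≠ some v := by
          intro v n hn
          have := hg_some x' v n hn
          rw [hgx'] at this; exact absurd this (by simp)
        have : g x = none := by
          apply hg_none
          intro v n hn
          cases n with
          | zero => simp [gsRun] at hn
          | succ n =>
            simp only [gsRun, hfx, Option.map_eq_some_iff] at hn
            obtain ⟨a, ha, _⟩ := hn
            exact hnone a n ha
        simp [this]
      | some p =>
        -- find a witness
        have hex : ∃ v : Y × ℕ, ∃ n, gsRun f n x' = some v := by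
          by_contra hc
          push_neg at hc
          have : g x' = none := hg_none x' hc
          rw [hgx'] at this; exact absurd this (by simp)
        obtain ⟨v, n, hn⟩ := hex
        have hv : g x' = some v := hg_some x' v n hn
        rw [hgx'] at hv
        have hpv : p = v := by simpa using hv
        subst hpv
        have : gsRun f (n + 1) x = some (p.1, p.2 + k) := by
          simp [gsRun, hfx, hn]
        rw [hg_some x _ (n + 1) this]
        rfl
  refine ⟨g, hsat, ?_⟩
  -- uniqueness
  intro g' hg'
  funext x
  -- (a) run n x = some v → g' x = some v
  have ha : ∀ (n : ℕ) (x : X) (v : Y × ℕ), gsRun f n x = some v → g' x = some v := by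
    intro n
    induction n with
    | zero => intro x v h; simp [gsRun] at h
    | succ n ih =>
      intro x v h
      obtain ⟨h1, h2, h3⟩ := hg' x
      cases hfx : f x with
      | none =>
        simp only [gsRun, hfx] at h
        exact absurd h (by simp)
      | some p =>
        obtain ⟨s, k⟩ := p
        cases s with
        | inl y =>
          simp only [gsRun, hfx] at h
          rw [h2 y k hfx, h]
        | inr x' =>
          simp only [gsRun, hfx, Option.map_eq_some_iff] at h
          obtain ⟨a, haa, hav⟩ := h
          rw [h3 x' k hfx, ih x' a haa]
          simp [hav]
  -- (b) g' x = some (y, t) → ∃ n, gsRun f n x = some (y, t), by strong induction on t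
  have hb : ∀ (t : ℕ) (x : X) (y : Y), g' x = some (y, t) →
      ∃ n, gsRun f n x = some (y, t) := by
    intro t
    induction t using Nat.strong_induction_on with
    | _ t ih =>
      intro x y hx
      obtain ⟨h1, h2, h3⟩ := hg' x
      cases hfx : f x with
      | none => rw [h1 hfx] at hx; exact absurd hx (by simp)
      | some p =>
        obtain ⟨s, k⟩ := p
        cases s with
        | inl y' =>
          have := h2 y' k hfx
          rw [this] at hx
          injection hx with hx
          refine ⟨1, ?_⟩
          simp [gsRun, hfx, ← hx]
        | inr x' =>
          have hk : k > 0 := hf x x' k hfx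
          have := h3 x' k hfx
          rw [this] at hx
          rw [Option.map_eq_some_iff] at hx
          obtain ⟨⟨y0, t0⟩, hx0, heq⟩ := hx
          simp only [Prod.mk.injEq] at heq
          obtain ⟨hy0, ht0⟩ := heq
          have ht0lt : t0 < t := by omega
          obtain ⟨n, hn⟩ := ih t0 ht0lt x' y0 hx0
          refine ⟨n + 1, ?_⟩
          simp [gsRun, hfx, hn, ht0, hy0]
  -- conclude g' x = g x
  cases hgx : g x with
  | none =>
    cases hg'x : g' x with
    | none => rfl
    | some v =>
      obtain ⟨y, t⟩ := v
      obtain ⟨n, hn⟩ := hb t x y hg'x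
      have := hg_some x (y, t) n hn
      rw [hgx] at this; exact absurd this (by simp)
  | some v =>
    have hex : ∃ w : Y × ℕ, ∃ n, gsRun f n x = some w := by
      by_contra hc
      push_neg at hc
      have := hg_none x hc
      rw [hgx] at this; exact absurd this (by simp)
    obtain ⟨w, n, hn⟩ := hex
    have hw : g x = some w := hg_some x w n hn
    rw [hgx] at hw
    have hvw : v = w := by simpa using hw
    subst hvw
    exact ha n x v hn
end
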